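/- arXiv:2601.12640 — 8 statements merged into one kernel-verified Lean document; each statement's English description precedes it below -/
import Mathlib

section
/- Let Z be a finite set with |Z| > 6 and let λ ∈ (0, 1/2) and ε > 0 satisfy ε < 1/6 and ε·|Z| ≥ 1. Set M' := ⌈ε·|Z|⌉. Then there exists a natural number N and a family A_1, …, A_N of subsets of Z such that: |A_i| = M' for every i; |A_i ∩ A_j| < λ·M' for all i ≠ j; and N ≥ C(M', ⌈λM'⌉)^{-1} · (M')^{-1} · ((1−ε)/(2ε))^{⌈λM'⌉}, where C(a,b) denotes the binomial coefficient a choose b. -/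
open Finset

/-- A probability mass function (probability distribution) on a finite type. -/
def IsPMF {α : Type*} [Fintype α] (Q : α → ℝ) : Prop :=
  (∀ x, 0 ≤ Q x) ∧ ∑ x, Q x = 1

/-- A channel assigns to each input a probability distribution on outputs. -/
def IsChannel {α β : Type*} [Fintype β] (W : α → β → ℝ) : Prop :=
  ∀ x, (∀ y, 0 ≤ W x y) ∧ ∑ y, W x y = 1

/-- `QW(D) = ∑_x Q(x) · W(D|x)`. -/
noncomputable def outProb {α β : Type*} [Fintype α] (W : α → β → ℝ) (Q : α → ℝ)
    (D : Finset β) : ℝ :=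
  ∑ x, Q x * ∑ y ∈ D, W x y

/-- The Hamming weight of a Boolean function: the cardinality of `f⁻¹(1)`. -/
def hammingWeight {m : ℕ} (f : (Fin m → Bool) → Bool) : ℕ :=
  (Finset.univ.filter fun i => f i = true).card

/-- Boolean functions on `m` bits of Hamming weight exactly `S`. -/
def FeqNat (m S : ℕ) : Set ((Fin m → Bool) → Bool) := {f | hammingWeight f = S}

/-- Boolean functions on `m` bits of Hamming weight at most `S`. -/
def FleNat (m S : ℕ) : Set ((Fin m → Bool) → Bool) := {f | hammingWeight f ≤ S}

/-- Boolean functions on `m` bits of Hamming weight at least `S`. -/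
def FgeNat (m S : ℕ) : Set ((Fin m → Bool) → Bool) := {f | S ≤ hammingWeight f}

/-- Boolean functions on `m` bits of Hamming weight at most a real bound `S`. -/
def FleR (m : ℕ) (S : ℝ) : Set ((Fin m → Bool) → Bool) := {f | (hammingWeight f : ℝ) ≤ S}

/-- An `(n, m, ℱ, λ1, λ2)` BFC code: probability distributions `Q i` on `𝒳^n` for each
message `i ∈ {0,1}^m` and decoding sets `D f ⊆ 𝒴^n` for each `f ∈ ℱ`, such that the
false-negative error is at most `λ1` and the false-positive error is at most `λ2`. -/
def IsBFCCode {𝒳 𝒴 : Type*} [Fintype 𝒳] [Fintype 𝒴] [DecidableEq 𝒴] {n m : ℕ}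
    (W : (Fin n → 𝒳) → (Fin n → 𝒴) → ℝ)
    (ℱ : Set ((Fin m → Bool) → Bool))
    (Q : (Fin m → Bool) → (Fin n → 𝒳) → ℝ)
    (D : ((Fin m → Bool) → Bool) → Finset (Fin n → 𝒴))
    (lam1 lam2 : ℝ) : Prop :=
  (∀ i, IsPMF (Q i)) ∧
  ∀ (i : Fin m → Bool) (f : (Fin m → Bool) → Bool), f ∈ ℱ →
    (f i = true → outProb W (Q i) (D f)ᶜ ≤ lam1) ∧
    (f i = false → outProb W (Q i) (D f) ≤ lam2)

/-- An `(n, M, δ)` transmission code: distinct codewords, pairwise disjoint decoding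
sets, and decoding error at most `δ`. -/
def IsTransmissionCode {𝒳 𝒴 : Type*} [Fintype 𝒴] [DecidableEq 𝒴] {n M : ℕ}
    (W : (Fin n → 𝒳) → (Fin n → 𝒴) → ℝ)
    (u : Fin M → (Fin n → 𝒳)) (E : Fin M → Finset (Fin n → 𝒴)) (δ : ℝ) : Prop :=
  Function.Injective u ∧
  (∀ k l, k ≠ l → Disjoint (E k) (E l)) ∧
  ∀ k, ∑ y ∈ (E k)ᶜ, W (u k) y ≤ δ

/-- A family of channels `(W n)` supports rate `C` if for every `ξ > 0` and
`δ ∈ (0, 1/2)`, for every sufficiently large `n` there is an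
`(n, ⌈2^{n(C−ξ)}⌉, δ)` transmission code for `W n`. -/
def SupportsRate {𝒳 𝒴 : Type*} [Fintype 𝒴] [DecidableEq 𝒴]
    (W : ∀ n : ℕ, (Fin n → 𝒳) → (Fin n → 𝒴) → ℝ) (C : ℝ) : Prop :=
  ∀ ξ : ℝ, 0 < ξ → ∀ δ : ℝ, 0 < δ → δ < 1/2 →
    ∃ n₀ : ℕ, ∀ n ≥ n₀,
      ∃ (u : Fin ⌈(2:ℝ) ^ ((n : ℝ) * (C - ξ))⌉₊ → (Fin n → 𝒳))
        (E : Fin ⌈(2:ℝ) ^ ((n : ℝ) * (C - ξ))⌉₊ → Finset (Fin n → 𝒴)),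
        IsTransmissionCode (W n) u E δ

/-- An `(n, N, μ1, μ2)` identification (ID) code. -/
def IsIDCode {𝒳 𝒴 : Type*} [Fintype 𝒳] [Fintype 𝒴] [DecidableEq 𝒴] {n N : ℕ}
    (W : (Fin n → 𝒳) → (Fin n → 𝒴) → ℝ)
    (Q : Fin N → (Fin n → 𝒳) → ℝ) (D : Fin N → Finset (Fin n → 𝒴))
    (μ1 μ2 : ℝ) : Prop :=
  (∀ j, IsPMF (Q j)) ∧
  (∀ j, outProb W (Q j) (D j)ᶜ ≤ μ1) ∧
  (∀ l j, l ≠ j → outProb W (Q l) (D j) ≤ μ2)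

/-- Maximal code, Proposition 1: existence of a large family of
`M'`-element subsets of `Z` with small pairwise intersections. -/
theorem maximal_code {Z : Type*} [Fintype Z] [DecidableEq Z]
    (hZ : 6 < Fintype.card Z)
    (lam eps : ℝ) (hlam0 : 0 < lam) (hlam : lam < 1/2)
    (heps0 : 0 < eps) (heps : eps < 1/6)
    (hepsZ : 1 ≤ eps * (Fintype.card Z : ℝ))
    (M' : ℕ) (hM' : M' = ⌈eps * (Fintype.card Z : ℝ)⌉₊) :
    ∃ (N : ℕ) (A : Fin N → Finset Z),
      (∀ i, (A i).card = M') ∧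
      (∀ i j, i ≠ j → ((A i ∩ A j).card : ℝ) < lam * (M' : ℝ)) ∧
      ((Nat.choose M' ⌈lam * (M' : ℝ)⌉₊ : ℝ))⁻¹ * ((M' : ℝ))⁻¹ *
          ((1 - eps) / (2 * eps)) ^ ⌈lam * (M' : ℝ)⌉₊ ≤ (N : ℝ) := by
  classical
  set n := Fintype.card Z with hn
  set t := ⌈lam * (M' : ℝ)⌉₊ with ht
  have hn0 : (0:ℝ) < n := by positivity
  have hn6 : (6:ℝ) < n := by exact_mod_cast hZ
  have hM1 : 1 ≤ M' := by
    rw [hM']; exact Nat.one_le_ceil_iff.mpr (by linarith)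
  have hM1R : (1:ℝ) ≤ M' := by exact_mod_cast hM1
  have hMceil : (M' : ℝ) < eps * n + 1 := by
    rw [hM']; exact Nat.ceil_lt_add_one (by linarith)
  have hM2eps : (M' : ℝ) ≤ 2 * eps * n := by nlinarith
  have hMnR : (M' : ℝ) ≤ n := by nlinarith
  have hMn : M' ≤ n := by exact_mod_cast hMnR
  have hlamM0 : 0 < lam * M' := by positivity
  have ht1 : 1 ≤ t := Nat.one_le_ceil_iff.mpr hlamM0
  have htM : t ≤ M' := Nat.ceil_le.mpr (by nlinarith)
  have htR : (t : ℝ) < lam * M' + 1 := Nat.ceil_lt_add_one (le_of_lt hlamM0)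
  have ht_eps : (t : ℝ) - 1 < eps * n := by nlinarith
  set r : ℝ := (1 - eps) / (2 * eps) with hr
  have hr0 : 0 < r := by
    apply div_pos <;> linarith
  have hrM : r * M' ≤ (1 - eps) * n := by
    have h2 : r * (2 * eps * n) = (1 - eps) * n := by
      rw [hr]; field_simp
    nlinarith [mul_le_mul_of_nonneg_left hM2eps (le_of_lt hr0)]
  -- the family predicate
  set Good : Finset (Finset Z) → Prop := fun S =>
    (∀ A ∈ S, A.card = M') ∧ ∀ A ∈ S, ∀ B ∈ S, A ≠ B → (A ∩ B).card < t
    with hGood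
  obtain ⟨S, hS, hSmax⟩ : ∃ S, Good S ∧ ∀ S', Good S' → S'.card ≤ S.card := by
    obtain ⟨S, hSmem, hmax⟩ := Finset.exists_max_image
      ((univ : Finset (Finset (Finset Z))).filter Good) Finset.card
      ⟨∅, mem_filter.mpr ⟨mem_univ _, fun A h => absurd h (notMem_empty _),
        fun A h => absurd h (notMem_empty _)⟩⟩
    exact ⟨S, (mem_filter.mp hSmem).2,
      fun S' h => hmax S' (mem_filter.mpr ⟨mem_univ _, h⟩)⟩
  -- maximality: every M'-set meets some member of S in ≥ t points
  have hcover : ∀ B : Finset Z, B.card = M' → ∃ A ∈ S, t ≤ (A ∩ B).card := by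
    intro B hB
    by_contra hcon
    push_neg at hcon
    have hBS : B ∉ S := by
      intro h
      have := hcon B h
      rw [inter_self, hB] at this
      omega
    have hGood' : Good (insert B S) := by
      constructor
      · intro A hA
        rcases mem_insert.mp hA with h | h
        · exact h ▸ hB
        · exact hS.1 A h
      · intro A hA B' hB' hne
        rcases mem_insert.mp hA with h1 | h1 <;> rcases mem_insert.mp hB' with h2 | h2
        · exact absurd (h1.trans h2.symm) hne
        · exact h1 ▸ (by rw [inter_comm]; exact hcon B' h2)
        · exact h2 ▸ hcon A h1
        · exact hS.2 A h1 B' h2 hne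
    have := hSmax _ hGood'
    rw [card_insert_of_notMem hBS] at this
    omega
  -- counting: supersets of a fixed t-set
  have hsup : ∀ S0 : Finset Z, S0.card = t →
      ((powersetCard M' (univ : Finset Z)).filter fun B => S0 ⊆ B).card
        ≤ (n - t).choose (M' - t) := by
    intro S0 hS0
    have hle : ((powersetCard M' (univ : Finset Z)).filter fun B => S0 ⊆ B).card
        ≤ (powersetCard (M' - t) ((univ : Finset Z) \ S0)).card := by
      apply card_le_card_of_injOn (fun B => B \ S0)
      · intro B hB
        rw [mem_coe, mem_filter, mem_powersetCard] at hB
        rw [mem_coe, mem_powersetCard]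
        refine ⟨sdiff_subset_sdiff (subset_univ _) le_rfl, ?_⟩
        rw [card_sdiff_of_subset hB.2, hB.1.2, hS0]
      · intro B1 h1 B2 h2 he
        simp only [mem_coe, mem_filter] at h1 h2
        have e1 : B1 \ S0 ∪ S0 = B1 := sdiff_union_of_subset h1.2
        have e2 : B2 \ S0 ∪ S0 = B2 := sdiff_union_of_subset h2.2
        have he' : B1 \ S0 = B2 \ S0 := he
        rw [← e1, ← e2, he']
    rwa [card_powersetCard, card_sdiff_of_subset (subset_univ _), card_univ, hS0] at hle
  -- counting: M'-sets meeting a fixed A in ≥ t points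
  have hmeet : ∀ A ∈ S,
      ((powersetCard M' (univ : Finset Z)).filter fun B => t ≤ (A ∩ B).card).card
        ≤ M'.choose t * (n - t).choose (M' - t) := by
    intro A hA
    have hAcard : A.card = M' := hS.1 A hA
    have hsub : ((powersetCard M' (univ : Finset Z)).filter fun B => t ≤ (A ∩ B).card) ⊆
        (powersetCard t A).biUnion fun S0 =>
          (powersetCard M' (univ : Finset Z)).filter fun B => S0 ⊆ B := by
      intro B hB
      rw [mem_filter] at hB
      obtain ⟨S0, hS0sub, hS0card⟩ := Finset.exists_subset_card_eq hB.2
      refine mem_biUnion.mpr ⟨S0, ?_, mem_filter.mpr ⟨hB.1, ?_⟩⟩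
      · exact mem_powersetCard.mpr ⟨hS0sub.trans inter_subset_left, hS0card⟩
      · exact hS0sub.trans inter_subset_right
    calc ((powersetCard M' (univ : Finset Z)).filter fun B => t ≤ (A ∩ B).card).card
        ≤ ((powersetCard t A).biUnion fun S0 =>
            (powersetCard M' (univ : Finset Z)).filter fun B => S0 ⊆ B).card :=
          card_le_card hsub
      _ ≤ ∑ S0 ∈ powersetCard t A,
            ((powersetCard M' (univ : Finset Z)).filter fun B => S0 ⊆ B).card :=
          card_biUnion_le
      _ ≤ ∑ _S0 ∈ powersetCard t A, (n - t).choose (M' - t) := by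
          apply sum_le_sum
          intro S0 hS0
          exact hsup S0 (mem_powersetCard.mp hS0).2
      _ = M'.choose t * (n - t).choose (M' - t) := by
          rw [sum_const, card_powersetCard, hAcard, smul_eq_mul]
  -- total count
  have hcount : n.choose M' ≤ S.card * (M'.choose t * (n - t).choose (M' - t)) := by
    have h1 : (powersetCard M' (univ : Finset Z)) ⊆
        S.biUnion fun A =>
          (powersetCard M' (univ : Finset Z)).filter fun B => t ≤ (A ∩ B).card := by
      intro B hB
      obtain ⟨A, hA, hAB⟩ := hcover B (mem_powersetCard.mp hB).2
      exact mem_biUnion.mpr ⟨A, hA, mem_filter.mpr ⟨hB, hAB⟩⟩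
    have h2 := (card_le_card h1).trans card_biUnion_le
    rw [card_powersetCard, card_univ] at h2
    calc n.choose M' ≤ ∑ A ∈ S,
          ((powersetCard M' (univ : Finset Z)).filter fun B => t ≤ (A ∩ B).card).card := h2
      _ ≤ ∑ _A ∈ S, M'.choose t * (n - t).choose (M' - t) := sum_le_sum hmeet
      _ = S.card * (M'.choose t * (n - t).choose (M' - t)) := by
          rw [sum_const, smul_eq_mul]
  -- the product lower bound on C(n, M')
  have hstep : ∀ i < t, r * ((n - (i+1)).choose (M' - (i+1)) : ℝ)
      ≤ ((n - i).choose (M' - i) : ℝ) := by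
    intro i hi
    have hiM : i + 1 ≤ M' := le_trans hi htM
    have hin : i + 1 ≤ n := le_trans hiM hMn
    have hid : (n - i) * ((n - (i+1)).choose (M' - (i+1)))
        = ((n - i).choose (M' - i)) * (M' - i) := by
      have := Nat.add_one_mul_choose_eq (n - (i+1)) (M' - (i+1))
      have e1 : n - (i+1) + 1 = n - i := by omega
      have e2 : M' - (i+1) + 1 = M' - i := by omega
      simpa [Nat.succ_eq_add_one, e1, e2] using this
    have hidR : ((n - i : ℕ) : ℝ) * ((n - (i+1)).choose (M' - (i+1)) : ℝ)
        = ((n - i).choose (M' - i) : ℝ) * ((M' - i : ℕ) : ℝ) := by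
      exact_mod_cast congrArg (Nat.cast (R := ℝ)) hid
    have hMi0 : (0:ℝ) < ((M' - i : ℕ) : ℝ) := by
      have : 0 < M' - i := by omega
      exact_mod_cast this
    have hiR : (i : ℝ) ≤ (t : ℝ) - 1 := by
      have : i + 1 ≤ t := hi
      have := (Nat.cast_le (α := ℝ)).mpr this
      push_cast at this ⊢
      linarith
    have hkey : r * ((M' - i : ℕ) : ℝ) ≤ ((n - i : ℕ) : ℝ) := by
      have hcast1 : ((M' - i : ℕ) : ℝ) ≤ (M' : ℝ) := by
        exact_mod_cast Nat.sub_le M' i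
      have hcast2 : ((n - i : ℕ) : ℝ) = (n : ℝ) - i := by
        rw [Nat.cast_sub (by omega)]
      have h1 : r * ((M' - i : ℕ) : ℝ) ≤ r * M' :=
        mul_le_mul_of_nonneg_left hcast1 (le_of_lt hr0)
      have h2 : (i : ℝ) < eps * n := by linarith
      rw [hcast2]
      linarith
    have hc0 : (0:ℝ) ≤ ((n - (i+1)).choose (M' - (i+1)) : ℝ) := Nat.cast_nonneg _
    have h3 : r * ((n - (i+1)).choose (M' - (i+1)) : ℝ) * ((M' - i : ℕ) : ℝ)
        ≤ ((n - i).choose (M' - i) : ℝ) * ((M' - i : ℕ) : ℝ) := by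
      calc r * ((n - (i+1)).choose (M' - (i+1)) : ℝ) * ((M' - i : ℕ) : ℝ)
          = (r * ((M' - i : ℕ) : ℝ)) * ((n - (i+1)).choose (M' - (i+1)) : ℝ) := by ring
        _ ≤ ((n - i : ℕ) : ℝ) * ((n - (i+1)).choose (M' - (i+1)) : ℝ) :=
            mul_le_mul_of_nonneg_right hkey hc0
        _ = ((n - i).choose (M' - i) : ℝ) * ((M' - i : ℕ) : ℝ) := hidR
    exact le_of_mul_le_mul_right h3 hMi0
  have hind : ∀ i ≤ t, r ^ i * ((n - i).choose (M' - i) : ℝ) ≤ (n.choose M' : ℝ) := by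
    intro i
    induction i with
    | zero => simp
    | succ i ih =>
      intro h
      have hi : i < t := h
      have h1 := hstep i hi
      calc r ^ (i+1) * ((n - (i+1)).choose (M' - (i+1)) : ℝ)
          = r ^ i * (r * ((n - (i+1)).choose (M' - (i+1)) : ℝ)) := by ring
        _ ≤ r ^ i * ((n - i).choose (M' - i) : ℝ) :=
            mul_le_mul_of_nonneg_left h1 (pow_nonneg (le_of_lt hr0) i)
        _ ≤ (n.choose M' : ℝ) := ih (le_of_lt hi)
  -- combine
  have hc1 : (1:ℝ) ≤ ((n - t).choose (M' - t) : ℝ) := by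
    have : 0 < (n - t).choose (M' - t) := Nat.choose_pos (by omega)
    exact_mod_cast this
  have hC1 : (1:ℝ) ≤ (M'.choose t : ℝ) := by
    have : 0 < M'.choose t := Nat.choose_pos htM
    exact_mod_cast this
  have hNC : (n.choose M' : ℝ)
      ≤ (S.card : ℝ) * (M'.choose t : ℝ) * ((n - t).choose (M' - t) : ℝ) := by
    have := (Nat.cast_le (α := ℝ)).mpr hcount
    push_cast at this
    linarith
  have hrt := hind t le_rfl
  have hfinal : r ^ t ≤ (S.card : ℝ) * (M'.choose t : ℝ) := by
    have h4 : r ^ t * ((n - t).choose (M' - t) : ℝ)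
        ≤ ((S.card : ℝ) * (M'.choose t : ℝ)) * ((n - t).choose (M' - t) : ℝ) := by
      calc r ^ t * ((n - t).choose (M' - t) : ℝ) ≤ (n.choose M' : ℝ) := hrt
        _ ≤ ((S.card : ℝ) * (M'.choose t : ℝ)) * ((n - t).choose (M' - t) : ℝ) := hNC
    exact le_of_mul_le_mul_right h4 (by linarith)
  -- build the family
  refine ⟨S.card, fun i => (S.equivFin.symm i : Finset Z), ?_, ?_, ?_⟩
  · intro i
    exact hS.1 _ (S.equivFin.symm i).2
  · intro i j hij
    have hne : ((S.equivFin.symm i : Finset Z)) ≠ ((S.equivFin.symm j : Finset Z)) := by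
      intro h
      exact hij (S.equivFin.symm.injective (Subtype.ext h))
    have hlt := hS.2 _ (S.equivFin.symm i).2 _ (S.equivFin.symm j).2 hne
    have hlt' : ((S.equivFin.symm i : Finset Z) ∩ (S.equivFin.symm j : Finset Z)).card + 1 ≤ t :=
      hlt
    have hcR := (Nat.cast_le (α := ℝ)).mpr hlt'
    push_cast at hcR
    linarith
  · have hMinv : (M' : ℝ)⁻¹ ≤ 1 := by
      rw [inv_le_one_iff₀]; right; exact hM1R
    have hCpos : (0:ℝ) < (M'.choose t : ℝ) := by linarith
    have h5 : (M'.choose t : ℝ)⁻¹ * (M' : ℝ)⁻¹ * r ^ t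
        ≤ (M'.choose t : ℝ)⁻¹ * 1 * r ^ t :=
      mul_le_mul_of_nonneg_right
        (mul_le_mul_of_nonneg_left hMinv (by positivity))
        (pow_nonneg (le_of_lt hr0) t)
    have h6 : (M'.choose t : ℝ)⁻¹ * 1 * r ^ t ≤ (S.card : ℝ) := by
      rw [mul_one, inv_mul_le_iff₀ hCpos]
      calc r ^ t ≤ (S.card : ℝ) * (M'.choose t : ℝ) := hfinal
        _ = (M'.choose t : ℝ) * (S.card : ℝ) := by ring
    exact le_trans h5 h6
end

section
/- Fix finite alphabets 𝒳, 𝒴, a blocklength n, and a channel W. Let δ ∈ (0, 1/2), and let {(u_k, E_k)}_{k=1}^{M} be an (n, M, δ) transmission code for W. Let λ > 0, let m, S be positive integers, and let (A_i)_{i ∈ {0,1}^m} be subsets of the codeword set {u_1, …, u_M} with |A_i| = M' ≥ 1 for all i and |A_i ∩ A_j| < λ·M' for all i ≠ j. For each i ∈ {0,1}^m let Q_i be the uniform distribution on A_i, and for each f ∈ ℱ_m^W(≤S) define D_f := ⋃ { E_k : u_k ∈ ⋃_{ℓ ∈ f^{-1}(1)} A_ℓ }. Then for all i ∈ {0,1}^m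 and all f ∈ ℱ_m^W(≤S): if f(i) = 1 then Q_i W(D_f^c) ≤ δ, and if f(i) = 0 then Q_i W(D_f) ≤ S·λ + δ. In particular, ((Q_i), (D_f)) is an (n, m, ℱ_m^W(≤S), δ, Sλ+δ) BFC code. -/
open Finset

lemma outProb_uniform_aux {𝒳 𝒴 : Type*} [Fintype 𝒳] [DecidableEq 𝒳] [Fintype 𝒴]
    {n M : ℕ} (W : (Fin n → 𝒳) → (Fin n → 𝒴) → ℝ)
    (u : Fin M → (Fin n → 𝒳)) (A : Finset (Fin M)) (M' : ℕ) (D : Finset (Fin n → 𝒴)) :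
    outProb W (fun x => ((A.filter fun k => u k = x).card : ℝ) / (M' : ℝ)) D
      = (∑ k ∈ A, ∑ y ∈ D, W (u k) y) / (M' : ℝ) := by
  unfold outProb
  have key : ∑ x : Fin n → 𝒳, ((A.filter fun k => u k = x).card : ℝ) * (∑ y ∈ D, W x y)
      = ∑ k ∈ A, ∑ y ∈ D, W (u k) y := by
    have h1 : ∀ x : Fin n → 𝒳, ((A.filter fun k => u k = x).card : ℝ) * (∑ y ∈ D, W x y)
        = ∑ k ∈ A, if u k = x then (∑ y ∈ D, W x y) else 0 := by
      intro x
      rw [Finset.card_filter]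
      push_cast
      rw [Finset.sum_mul]
      simp [ite_mul]
    simp_rw [h1]
    rw [Finset.sum_comm]
    refine Finset.sum_congr rfl fun k _ => ?_
    simp
  simp_rw [div_mul_eq_mul_div]
  rw [← Finset.sum_div, key]

/-- error probability of the constructed BFC code: starting from an
`(n, M, δ)` transmission code and a family of index sets `A i ⊆ {1,…,M}` of size
`M' ≥ 1` with pairwise intersections `< λM'`, the uniform encoders over `A i` together
with the decoding sets `D f = ⋃_{k ∈ ⋃_{ℓ ∈ f⁻¹(1)} A ℓ} E k` form an
`(n, m, ℱ_m^W(≤S), δ, Sλ+δ)` BFC code. -/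
theorem bfc_code_error_bounds {𝒳 𝒴 : Type*}
    [Fintype 𝒳] [DecidableEq 𝒳] [Fintype 𝒴] [DecidableEq 𝒴] {n M : ℕ}
    (W : (Fin n → 𝒳) → (Fin n → 𝒴) → ℝ) (hW : IsChannel W)
    (δ : ℝ) (hδ0 : 0 < δ) (hδ1 : δ < 1/2)
    (u : Fin M → (Fin n → 𝒳)) (E : Fin M → Finset (Fin n → 𝒴))
    (hcode : IsTransmissionCode W u E δ)
    (lam : ℝ) (hlam : 0 < lam)
    (m S : ℕ) (hm : 0 < m) (hS : 0 < S)
    (M' : ℕ) (hM'1 : 1 ≤ M')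
    (A : (Fin m → Bool) → Finset (Fin M))
    (hAcard : ∀ i, (A i).card = M')
    (hAint : ∀ i j, i ≠ j → ((A i ∩ A j).card : ℝ) < lam * (M' : ℝ)) :
    (∀ (i : Fin m → Bool) (f : (Fin m → Bool) → Bool), f ∈ FleNat m S →
      (f i = true →
        outProb W (fun x => (((A i).filter fun k => u k = x).card : ℝ) / (M' : ℝ))
          ((((Finset.univ.filter fun l => f l = true).biUnion A).biUnion E)ᶜ) ≤ δ) ∧
      (f i = false →
        outProb W (fun x => (((A i).filter fun k => u k = x).card : ℝ) / (M' : ℝ))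
          (((Finset.univ.filter fun l => f l = true).biUnion A).biUnion E)
            ≤ (S : ℝ) * lam + δ)) ∧
    IsBFCCode W (FleNat m S)
      (fun i x => (((A i).filter fun k => u k = x).card : ℝ) / (M' : ℝ))
      (fun f => ((Finset.univ.filter fun l => f l = true).biUnion A).biUnion E)
      δ ((S : ℝ) * lam + δ) := by
  obtain ⟨huinj, hEdis, hEerr⟩ := hcode
  have hM'pos : (0:ℝ) < (M' : ℝ) := by exact_mod_cast hM'1
  have hWnn : ∀ x (D : Finset (Fin n → 𝒴)), 0 ≤ ∑ y ∈ D, W x y :=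
    fun x D => Finset.sum_nonneg fun y _ => (hW x).1 y
  have hWmono : ∀ (x) {D D' : Finset (Fin n → 𝒴)}, D ⊆ D' →
      ∑ y ∈ D, W x y ≤ ∑ y ∈ D', W x y :=
    fun x D D' h => Finset.sum_le_sum_of_subset_of_nonneg h (fun y _ _ => (hW x).1 y)
  have hWle1 : ∀ x (D : Finset (Fin n → 𝒴)), ∑ y ∈ D, W x y ≤ 1 := by
    intro x D
    calc ∑ y ∈ D, W x y ≤ ∑ y, W x y := hWmono x (Finset.subset_univ D)
      _ = 1 := (hW x).2
  have hmain : ∀ (i : Fin m → Bool) (f : (Fin m → Bool) → Bool), f ∈ FleNat m S →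
      (f i = true →
        outProb W (fun x => (((A i).filter fun k => u k = x).card : ℝ) / (M' : ℝ))
          ((((Finset.univ.filter fun l => f l = true).biUnion A).biUnion E)ᶜ) ≤ δ) ∧
      (f i = false →
        outProb W (fun x => (((A i).filter fun k => u k = x).card : ℝ) / (M' : ℝ))
          (((Finset.univ.filter fun l => f l = true).biUnion A).biUnion E)
            ≤ (S : ℝ) * lam + δ) := by
    intro i f hf
    set B := (Finset.univ.filter fun l => f l = true).biUnion A with hB
    set Df := B.biUnion E with hDf
    constructor
    · intro hfi
      rw [outProb_uniform_aux, div_le_iff₀ hM'pos]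
      calc ∑ k ∈ A i, ∑ y ∈ Dfᶜ, W (u k) y ≤ ∑ _k ∈ A i, δ := by
            refine Finset.sum_le_sum fun k hk => ?_
            have hsub : E k ⊆ Df := by
              intro y hy
              refine Finset.mem_biUnion.2 ⟨k, ?_, hy⟩
              exact Finset.mem_biUnion.2
                ⟨i, Finset.mem_filter.2 ⟨Finset.mem_univ _, hfi⟩, hk⟩
            exact le_trans (hWmono _ (compl_subset_compl.2 hsub)) (hEerr k)
        _ = δ * (M' : ℝ) := by rw [Finset.sum_const, hAcard]; ring
    · intro hfi
      rw [outProb_uniform_aux, div_le_iff₀ hM'pos]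
      have step1 : ∀ k ∈ A i, ∑ y ∈ Df, W (u k) y ≤ (if k ∈ B then (1:ℝ) else 0) + δ := by
        intro k _hk
        have hsplit : Df ⊆ (Df ∩ E k) ∪ (E k)ᶜ := by
          intro y hy
          by_cases h : y ∈ E k
          · exact Finset.mem_union_left _ (Finset.mem_inter.2 ⟨hy, h⟩)
          · exact Finset.mem_union_right _ (Finset.mem_compl.2 h)
        have hui : ∑ y ∈ (Df ∩ E k) ∪ (E k)ᶜ, W (u k) y
              + ∑ y ∈ (Df ∩ E k) ∩ (E k)ᶜ, W (u k) y
            = ∑ y ∈ Df ∩ E k, W (u k) y + ∑ y ∈ (E k)ᶜ, W (u k) y :=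
          Finset.sum_union_inter
        have hmain2 : ∑ y ∈ Df ∩ E k, W (u k) y ≤ if k ∈ B then (1:ℝ) else 0 := by
          by_cases hkB : k ∈ B
          · simpa [hkB] using hWle1 (u k) (Df ∩ E k)
          · have hempty : Df ∩ E k = ∅ := by
              rw [Finset.eq_empty_iff_forall_notMem]
              intro y hy
              obtain ⟨hyD, hyE⟩ := Finset.mem_inter.1 hy
              obtain ⟨j, hjB, hyEj⟩ := Finset.mem_biUnion.1 hyD
              have hjk : j ≠ k := fun h => hkB (h ▸ hjB)
              exact Finset.disjoint_left.1 (hEdis j k hjk) hyEj hyE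
            simp [hempty, hkB]
        have h1 := hWmono (u k) hsplit
        have h2 := hWnn (u k) ((Df ∩ E k) ∩ (E k)ᶜ)
        have h3 := hEerr k
        linarith
      have hcardB : ((A i ∩ B).card : ℝ) ≤ (S:ℝ) * lam * (M' : ℝ) := by
        have h1 : (A i ∩ B) ⊆
            (Finset.univ.filter fun l => f l = true).biUnion (fun ℓ => A i ∩ A ℓ) := by
          intro k hk
          obtain ⟨hkA, hkB⟩ := Finset.mem_inter.1 hk
          obtain ⟨ℓ, hℓ, hkℓ⟩ := Finset.mem_biUnion.1 hkB
          exact Finset.mem_biUnion.2 ⟨ℓ, hℓ, Finset.mem_inter.2 ⟨hkA, hkℓ⟩⟩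
        have h2 : (A i ∩ B).card ≤
            ∑ ℓ ∈ Finset.univ.filter (fun l => f l = true), (A i ∩ A ℓ).card :=
          le_trans (Finset.card_le_card h1) Finset.card_biUnion_le
        have h3 : ∑ ℓ ∈ Finset.univ.filter (fun l => f l = true), ((A i ∩ A ℓ).card : ℝ)
            ≤ ∑ _ℓ ∈ Finset.univ.filter (fun l => f l = true), lam * (M' : ℝ) := by
          refine Finset.sum_le_sum fun ℓ hℓ => ?_
          have hne : i ≠ ℓ := by
            intro h
            rw [← h] at hℓ
            simp [hfi] at hℓ
          exact (hAint i ℓ hne).le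
        have h4 : ((Finset.univ.filter fun l => f l = true).card : ℝ) ≤ (S : ℝ) := by
          have : hammingWeight f ≤ S := hf
          exact_mod_cast this
        calc ((A i ∩ B).card : ℝ)
            ≤ ∑ ℓ ∈ Finset.univ.filter (fun l => f l = true), ((A i ∩ A ℓ).card : ℝ) := by
              exact_mod_cast h2
          _ ≤ ((Finset.univ.filter fun l => f l = true).card : ℝ) * (lam * (M' : ℝ)) := by
              rw [Finset.sum_const, nsmul_eq_mul] at h3; exact h3
          _ ≤ (S : ℝ) * (lam * (M' : ℝ)) := by
              refine mul_le_mul_of_nonneg_right h4 ?_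
              positivity
          _ = (S:ℝ) * lam * (M' : ℝ) := by ring
      calc ∑ k ∈ A i, ∑ y ∈ Df, W (u k) y
          ≤ ∑ k ∈ A i, ((if k ∈ B then (1:ℝ) else 0) + δ) := Finset.sum_le_sum step1
        _ = ((A i ∩ B).card : ℝ) + (M' : ℝ) * δ := by
            rw [Finset.sum_add_distrib, Finset.sum_ite_mem, Finset.sum_const,
              Finset.sum_const, hAcard, nsmul_eq_mul, nsmul_eq_mul]
            ring
        _ ≤ ((S : ℝ) * lam + δ) * (M' : ℝ) := by nlinarith
  refine ⟨hmain, ?_, fun i f hf => hmain i f hf⟩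
  intro i
  constructor
  · intro x; positivity
  · rw [← Finset.sum_div, div_eq_one_iff_eq (ne_of_gt hM'pos), ← Nat.cast_sum]
    norm_cast
    rw [← hAcard i]
    exact (Finset.card_eq_sum_card_fiberwise (fun k _ => Finset.mem_univ (u k))).symm
end

section
/- Fix finite alphabets 𝒳, 𝒴 and a family of channels (W_n)_{n ∈ ℕ}, W_n on blocklength n, that supports rate C > 0. Let c be a fixed positive integer. Then for all λ1, λ2 ∈ (0,1) and all γ ∈ (0, C), for every sufficiently large n there exist a positive integer m with m > 2^{(C−γ)n} and an (n, m, ℱ_m^W(≤c), λ1, λ2) BFC code for W_n. (Achievability, Case 1: the computation rate C is achievable for the class ℱ_m^W(≤c) with scaling function L(R,n) = 2^{Rn}.) -/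
open Finset

/-- number of coordinates where two functions agree -/
def agreeCard {L q : ℕ} (f g : Fin L → Fin q) : ℕ :=
  (Finset.univ.filter fun x => f x = g x).card

lemma agreeCard_comm {L q : ℕ} (f g : Fin L → Fin q) : agreeCard f g = agreeCard g f := by
  unfold agreeCard
  congr 1
  apply Finset.filter_congr
  intro x _
  simp [eq_comm]

lemma agreeCard_self {L q : ℕ} (f : Fin L → Fin q) : agreeCard f f = L := by
  simp [agreeCard]

/-- count of functions agreeing with f on all of A -/
lemma card_fixed_on {L q : ℕ} (f : Fin L → Fin q) (A : Finset (Fin L)) :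
    (Finset.univ.filter fun g : Fin L → Fin q => ∀ x ∈ A, g x = f x).card
      = q ^ (L - A.card) := by
  classical
  have e : {g : Fin L → Fin q // ∀ x ∈ A, g x = f x} ≃ ({x : Fin L // x ∉ A} → Fin q) :=
    { toFun := fun g x => g.1 x.1
      invFun := fun F => ⟨fun x => if h : x ∈ A then f x else F ⟨x, h⟩, by
        intro x hx; simp [hx]⟩
      left_inv := by
        rintro ⟨g, hg⟩
        ext x
        by_cases h : x ∈ A
        · simp [h, hg x h]
        · simp [h]
      right_inv := by
        intro F
        funext x
        simp [x.2] }
  have h1 : (Finset.univ.filter fun g : Fin L → Fin q => ∀ x ∈ A, g x = f x).card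
      = Fintype.card {g : Fin L → Fin q // ∀ x ∈ A, g x = f x} := by
    rw [Fintype.card_subtype]
  rw [h1, Fintype.card_congr e, Fintype.card_fun]
  congr 1
  · simp [Fintype.card_fin]
  · rw [Fintype.card_subtype]
    have : (Finset.univ.filter fun x : Fin L => x ∉ A) = Aᶜ := by
      ext x; simp
    rw [this, Finset.card_compl]
    simp

/-- ball bound: number of g with agreement ≥ s is at most C(L,s) q^{L-s} -/
lemma ball_card_le {L q s : ℕ} (f : Fin L → Fin q) :
    (Finset.univ.filter fun g : Fin L → Fin q => s ≤ agreeCard f g).card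
      ≤ L.choose s * q ^ (L - s) := by
  classical
  have hsub : (Finset.univ.filter fun g : Fin L → Fin q => s ≤ agreeCard f g)
      ⊆ (Finset.univ.powersetCard s).biUnion
          (fun A => Finset.univ.filter fun g : Fin L → Fin q => ∀ x ∈ A, g x = f x) := by
    intro g hg
    simp only [Finset.mem_filter, Finset.mem_univ, true_and] at hg
    obtain ⟨A, hA, hAcard⟩ := Finset.exists_subset_card_eq hg
    simp only [Finset.mem_biUnion, Finset.mem_powersetCard, Finset.mem_filter,
      Finset.mem_univ, true_and]
    exact ⟨A, ⟨hA.trans (Finset.filter_subset _ _) |>.trans (by intro x _; exact Finset.mem_univ x), hAcard⟩,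
      fun x hx => by
        have := hA hx
        simp only [Finset.mem_filter] at this
        exact this.2.symm⟩
  calc (Finset.univ.filter fun g : Fin L → Fin q => s ≤ agreeCard f g).card
      ≤ _ := Finset.card_le_card hsub
    _ ≤ ∑ A ∈ Finset.univ.powersetCard s,
          (Finset.univ.filter fun g : Fin L → Fin q => ∀ x ∈ A, g x = f x).card :=
        Finset.card_biUnion_le
    _ = ∑ A ∈ Finset.univ.powersetCard s, q ^ (L - s) := by
        apply Finset.sum_congr rfl
        intro A hA
        rw [Finset.mem_powersetCard] at hA
        rw [card_fixed_on, hA.2]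
    _ = L.choose s * q ^ (L - s) := by
        rw [Finset.sum_const, smul_eq_mul, Finset.card_powersetCard]
        simp

/-- For a channel, the probability of any set is between 0 and 1. -/
lemma setProb_nonneg {α β : Type*} [Fintype β] {W : α → β → ℝ} (hW : IsChannel W)
    (x : α) (D : Finset β) : 0 ≤ ∑ y ∈ D, W x y :=
  Finset.sum_nonneg fun y _ => (hW x).1 y

lemma setProb_le_one {α β : Type*} [Fintype β] {W : α → β → ℝ} (hW : IsChannel W)
    (x : α) (D : Finset β) : ∑ y ∈ D, W x y ≤ 1 := by
  rw [← (hW x).2]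
  exact Finset.sum_le_sum_of_subset_of_nonneg (Finset.subset_univ D)
    (fun y _ _ => (hW x).1 y)

lemma setProb_mono {α β : Type*} [Fintype β] {W : α → β → ℝ} (hW : IsChannel W)
    (x : α) {D D' : Finset β} (h : D ⊆ D') : ∑ y ∈ D, W x y ≤ ∑ y ∈ D', W x y :=
  Finset.sum_le_sum_of_subset_of_nonneg h (fun y _ _ => (hW x).1 y)

/-- subadditivity of set probability over a biUnion -/
lemma setProb_biUnion_le {α β ι : Type*} [Fintype β] [DecidableEq β] {W : α → β → ℝ}
    (hW : IsChannel W) (x : α) (s : Finset ι) (t : ι → Finset β) :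
    ∑ y ∈ s.biUnion t, W x y ≤ ∑ j ∈ s, ∑ y ∈ t j, W x y := by
  classical
  induction s using Finset.induction with
  | empty => simp
  | insert a s' hj ih =>
    rw [Finset.biUnion_insert, Finset.sum_insert hj]
    have h1 : ∑ y ∈ t a ∪ s'.biUnion t, W x y ≤
        (∑ y ∈ t a, W x y) + ∑ y ∈ s'.biUnion t, W x y := by
      have := Finset.sum_union_inter (s₁ := t a) (s₂ := s'.biUnion t) (f := W x)
      have h2 : 0 ≤ ∑ y ∈ t a ∩ s'.biUnion t, W x y := setProb_nonneg hW x _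
      linarith
    exact h1.trans (by linarith [ih])

/-- outProb for an empirical (uniform over multiset image) distribution -/
lemma outProb_avg {α β : Type*} [Fintype α] [Fintype β] [DecidableEq α]
    (W : α → β → ℝ) (L : ℕ) (g : Fin L → α) (D : Finset β) :
    outProb W (fun v => (∑ x : Fin L, if g x = v then (1:ℝ) else 0) / L) D
      = (∑ x : Fin L, ∑ y ∈ D, W (g x) y) / L := by
  unfold outProb
  have h1 : ∀ v : α, (∑ x : Fin L, if g x = v then (1:ℝ) else 0) / L * ∑ y ∈ D, W v y
      = (∑ x : Fin L, if g x = v then ∑ y ∈ D, W (g x) y else 0) / L := by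
    intro v
    rw [div_mul_eq_mul_div, Finset.sum_mul]
    congr 1
    apply Finset.sum_congr rfl
    intro x _
    by_cases h : g x = v
    · simp [h]
    · simp [h]
  simp only [h1]
  rw [← Finset.sum_div]
  congr 1
  rw [Finset.sum_comm]
  apply Finset.sum_congr rfl
  intro x _
  rw [Finset.sum_ite_eq Finset.univ (g x) (fun _ => ∑ y ∈ D, W (g x) y)]
  simp

lemma pmf_avg {α : Type*} [Fintype α] [DecidableEq α] (L : ℕ) (hL : 0 < L) (g : Fin L → α) :
    (∀ v, 0 ≤ (∑ x : Fin L, if g x = v then (1:ℝ) else 0) / L) ∧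
      ∑ v, (∑ x : Fin L, if g x = v then (1:ℝ) else 0) / L = 1 := by
  constructor
  · intro v
    apply div_nonneg _ (Nat.cast_nonneg L)
    exact Finset.sum_nonneg fun x _ => by positivity
  · rw [← Finset.sum_div, Finset.sum_comm]
    have : ∀ x : Fin L, ∑ v, (if g x = v then (1:ℝ) else 0) = 1 := by
      intro x
      rw [Finset.sum_ite_eq Finset.univ (g x) (fun _ => (1:ℝ))]
      simp
    rw [Finset.sum_congr rfl (fun x _ => this x)]
    simp [Finset.sum_const]
    omega

/-- Existence of a large code with small pairwise agreement. -/
lemma exists_code (L k s : ℕ) (hs : s ≤ L) (hks : 2 * L ≤ k * s) :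
    ∃ S : Finset (Fin L → Fin (2 ^ k)),
      2 ^ L ≤ S.card ∧ ∀ f ∈ S, ∀ g ∈ S, f ≠ g → agreeCard f g < s := by
  classical
  set q := 2 ^ k with hq
  set P : Finset (Fin L → Fin q) → Prop :=
    fun S => ∀ f ∈ S, ∀ g ∈ S, f ≠ g → agreeCard f g < s with hP
  have hPempty : P ∅ := by intro f hf; simp at hf
  obtain ⟨S, hSmem, hSmax⟩ := Finset.exists_max_image
    ((Finset.univ : Finset (Finset (Fin L → Fin q))).filter fun S => P S) Finset.card
    ⟨∅, by simp only [Finset.mem_filter, Finset.mem_univ, true_and]; exact hPempty⟩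
  rw [Finset.mem_filter] at hSmem
  have hPS : P S := hSmem.2
  refine ⟨S, ?_, hPS⟩
  -- every g is in some ball around an element of S
  have hcover : (Finset.univ : Finset (Fin L → Fin q)) ⊆
      S.biUnion (fun f => Finset.univ.filter fun g => s ≤ agreeCard f g) := by
    intro g _
    simp only [Finset.mem_biUnion, Finset.mem_filter, Finset.mem_univ, true_and]
    by_cases hgS : g ∈ S
    · exact ⟨g, hgS, by rw [agreeCard_self]; exact hs⟩
    · -- insert g S violates P by maximality
      have hnP : ¬ P (insert g S) := by
        intro hP'
        have := hSmax (insert g S) (by simp only [Finset.mem_filter, Finset.mem_univ, true_and]; exact hP')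
        rw [Finset.card_insert_of_notMem hgS] at this
        omega
      simp only [hP] at hnP
      push_neg at hnP
      obtain ⟨f1, hf1, f2, hf2, hne, hagree⟩ := hnP
      rw [Finset.mem_insert] at hf1 hf2
      rcases hf1 with rfl | hf1
      · rcases hf2 with rfl | hf2
        · exact absurd rfl hne
        · exact ⟨f2, hf2, by rwa [agreeCard_comm] at hagree⟩
      · rcases hf2 with rfl | hf2
        · exact ⟨f1, hf1, hagree⟩
        · exact absurd (hPS f1 hf1 f2 hf2 hne) (not_lt.2 hagree)
  have hcount : q ^ L ≤ S.card * (L.choose s * q ^ (L - s)) := by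
    calc q ^ L = Fintype.card (Fin L → Fin q) := by simp [Fintype.card_fun]
      _ = (Finset.univ : Finset (Fin L → Fin q)).card := by rw [Finset.card_univ]
      _ ≤ (S.biUnion (fun f => Finset.univ.filter fun g => s ≤ agreeCard f g)).card :=
          Finset.card_le_card hcover
      _ ≤ ∑ f ∈ S, (Finset.univ.filter fun g => s ≤ agreeCard f g).card :=
          Finset.card_biUnion_le
      _ ≤ ∑ f ∈ S, L.choose s * q ^ (L - s) :=
          Finset.sum_le_sum fun f _ => ball_card_le f
      _ = S.card * (L.choose s * q ^ (L - s)) := by rw [Finset.sum_const, smul_eq_mul]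
  -- choose L s ≤ 2 ^ L
  have hchoose : L.choose s ≤ 2 ^ L := by
    calc L.choose s ≤ ∑ i ∈ Finset.range (L + 1), L.choose i :=
      Finset.single_le_sum (fun i _ => Nat.zero_le _) (Finset.mem_range.2 (by omega))
      _ = 2 ^ L := Nat.sum_range_choose L
  have hcount2 : q ^ L ≤ S.card * (2 ^ L * q ^ (L - s)) := by
    calc q ^ L ≤ S.card * (L.choose s * q ^ (L - s)) := hcount
      _ ≤ S.card * (2 ^ L * q ^ (L - s)) := by
          apply Nat.mul_le_mul_left
          exact Nat.mul_le_mul_right _ hchoose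
  -- q^L = 2^(k*L), q^(L-s) = 2^(k*(L-s)), and k*L ≥ 2*L + k*(L-s)
  have hqL : q ^ L = 2 ^ (k * L) := by rw [hq, ← pow_mul]
  have hqLs : q ^ (L - s) = 2 ^ (k * (L - s)) := by rw [hq, ← pow_mul]
  rw [hqL, hqLs] at hcount2
  have hexp : 2 * L + k * (L - s) ≤ k * L := by
    have : k * L = k * s + k * (L - s) := by
      rw [← Nat.mul_add, Nat.add_sub_cancel' hs]
    omega
  have h3 : 2 ^ (2 * L + k * (L - s)) ≤ S.card * (2 ^ L * 2 ^ (k * (L - s))) :=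
    le_trans (Nat.pow_le_pow_right (by norm_num) hexp) hcount2
  rw [pow_add, two_mul, pow_add] at h3
  have h4 : 2 ^ L * (2 ^ L * 2 ^ (k * (L - s))) ≤ S.card * (2 ^ L * 2 ^ (k * (L - s))) := by
    calc 2 ^ L * (2 ^ L * 2 ^ (k * (L - s))) = 2 ^ L * 2 ^ L * 2 ^ (k * (L - s)) := by ring
      _ ≤ _ := h3
  exact Nat.le_of_mul_le_mul_right h4 (Nat.mul_pos (Nat.pow_pos (by norm_num)) (Nat.pow_pos (by norm_num)))

/-- Construction of a BFC code from a transmission code plus a low-agreement code. -/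
lemma bfc_construct {𝒳 𝒴 : Type*} [Fintype 𝒳] [DecidableEq 𝒳] [Fintype 𝒴] [DecidableEq 𝒴]
    {n M L k c : ℕ} (hL : 0 < L)
    {W : (Fin n → 𝒳) → (Fin n → 𝒴) → ℝ} (hW : IsChannel W)
    {u : Fin M → (Fin n → 𝒳)} {E : Fin M → Finset (Fin n → 𝒴)} {δ : ℝ}
    (hδ0 : 0 ≤ δ)
    (hdisj : ∀ a b : Fin M, a ≠ b → Disjoint (E a) (E b))
    (herr : ∀ a, ∑ y ∈ (E a)ᶜ, W (u a) y ≤ δ)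
    (ι : Fin L × Fin (2 ^ k) → Fin M) (hι : Function.Injective ι)
    (φ : (Fin L → Bool) → (Fin L → Fin (2 ^ k)))
    (μ : ℝ) (hμ0 : 0 ≤ μ)
    (hφ : ∀ i j, i ≠ j → (agreeCard (φ i) (φ j) : ℝ) ≤ μ * L)
    (lam1 lam2 : ℝ) (hδ1 : δ ≤ lam1) (hsum : (c : ℝ) * (μ + δ) ≤ lam2) :
    ∃ (Q : (Fin L → Bool) → (Fin n → 𝒳) → ℝ)
      (D : ((Fin L → Bool) → Bool) → Finset (Fin n → 𝒴)),
      IsBFCCode W (FleNat L c) Q D lam1 lam2 := by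
  classical
  have hLR : (0:ℝ) < L := by exact_mod_cast hL
  -- the codeword map
  set g : (Fin L → Bool) → Fin L → (Fin n → 𝒳) := fun i x => u (ι (x, φ i x)) with hg
  set Dj : (Fin L → Bool) → Finset (Fin n → 𝒴) :=
    fun j => Finset.univ.biUnion fun x => E (ι (x, φ j x)) with hDj
  refine ⟨fun i v => (∑ x : Fin L, if g i x = v then (1:ℝ) else 0) / L,
    fun f => (Finset.univ.filter fun j => f j = true).biUnion Dj, ?_, ?_⟩
  · intro i
    exact pmf_avg L hL (g i)
  · intro i f hf
    have hwc : (Finset.univ.filter fun j => f j = true).card ≤ c := hf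
    constructor
    · -- false negative
      intro hfi
      have hEDj : ∀ x : Fin L, E (ι (x, φ i x)) ⊆ Dj i := by
        intro x
        exact Finset.subset_biUnion_of_mem (fun x' => E (ι (x', φ i x'))) (Finset.mem_univ x)
      have hDjDf : Dj i ⊆ (Finset.univ.filter fun j => f j = true).biUnion Dj :=
        Finset.subset_biUnion_of_mem Dj (Finset.mem_filter.mpr ⟨Finset.mem_univ i, hfi⟩)
      have key : outProb W (fun v => (∑ x : Fin L, if g i x = v then (1:ℝ) else 0) / L)
          ((Finset.univ.filter fun j => f j = true).biUnion Dj)ᶜ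
          = (∑ x : Fin L, ∑ y ∈ ((Finset.univ.filter fun j => f j = true).biUnion Dj)ᶜ,
              W (g i x) y) / L := outProb_avg W L (g i) _
      rw [key]
      rw [div_le_iff₀ hLR]
      calc (∑ x : Fin L, ∑ y ∈ ((Finset.univ.filter fun j => f j = true).biUnion Dj)ᶜ,
            W (g i x) y)
          ≤ ∑ x : Fin L, δ := by
            apply Finset.sum_le_sum
            intro x _
            have hsub : ((Finset.univ.filter fun j => f j = true).biUnion Dj)ᶜ
                ⊆ (E (ι (x, φ i x)))ᶜ :=
              compl_subset_compl.mpr ((hEDj x).trans hDjDf)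
            exact (setProb_mono hW _ hsub).trans (herr _)
        _ = L * δ := by rw [Finset.sum_const]; simp [Finset.card_univ, mul_comm]
        _ ≤ lam1 * L := by
            rw [mul_comm]
            exact mul_le_mul_of_nonneg_right hδ1 (Nat.cast_nonneg L)
    · -- false positive
      intro hfi
      have key : outProb W (fun v => (∑ x : Fin L, if g i x = v then (1:ℝ) else 0) / L)
          ((Finset.univ.filter fun j => f j = true).biUnion Dj)
          = (∑ x : Fin L, ∑ y ∈ ((Finset.univ.filter fun j => f j = true).biUnion Dj),
              W (g i x) y) / L := outProb_avg W L (g i) _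
      rw [key, div_le_iff₀ hLR]
      have step1 : ∑ x : Fin L, ∑ y ∈ ((Finset.univ.filter fun j => f j = true).biUnion Dj),
          W (g i x) y ≤ ∑ j ∈ (Finset.univ.filter fun j => f j = true),
            ∑ x : Fin L, ∑ y ∈ Dj j, W (g i x) y := by
        calc ∑ x : Fin L, ∑ y ∈ ((Finset.univ.filter fun j => f j = true).biUnion Dj),
              W (g i x) y
            ≤ ∑ x : Fin L, ∑ j ∈ (Finset.univ.filter fun j => f j = true),
                ∑ y ∈ Dj j, W (g i x) y :=
              Finset.sum_le_sum fun x _ => setProb_biUnion_le hW (g i x) _ _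
          _ = _ := Finset.sum_comm
      have step2 : ∀ j ∈ (Finset.univ.filter fun j => f j = true),
          ∑ x : Fin L, ∑ y ∈ Dj j, W (g i x) y ≤ (μ + δ) * L := by
        intro j hj
        rw [Finset.mem_filter] at hj
        have hij : i ≠ j := by
          intro h
          rw [h, hj.2] at hfi
          exact absurd hfi (by simp)
        have hagree : (agreeCard (φ i) (φ j) : ℝ) ≤ μ * L := hφ i j hij
        -- split over agreement set
        rw [← Finset.sum_filter_add_sum_filter_not Finset.univ (fun x => φ i x = φ j x)]
        have hA : ∑ x ∈ Finset.univ.filter (fun x => φ i x = φ j x),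
            ∑ y ∈ Dj j, W (g i x) y ≤ μ * L := by
          calc ∑ x ∈ Finset.univ.filter (fun x => φ i x = φ j x), ∑ y ∈ Dj j, W (g i x) y
              ≤ ∑ x ∈ Finset.univ.filter (fun x => φ i x = φ j x), 1 :=
                Finset.sum_le_sum fun x _ => setProb_le_one hW _ _
            _ = (agreeCard (φ i) (φ j) : ℝ) := by
                rw [Finset.sum_const]; simp [agreeCard]
            _ ≤ μ * L := hagree
        have hB : ∑ x ∈ Finset.univ.filter (fun x => ¬ φ i x = φ j x),
            ∑ y ∈ Dj j, W (g i x) y ≤ δ * L := by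
          calc ∑ x ∈ Finset.univ.filter (fun x => ¬ φ i x = φ j x), ∑ y ∈ Dj j, W (g i x) y
              ≤ ∑ x ∈ Finset.univ.filter (fun x => ¬ φ i x = φ j x), δ := by
                apply Finset.sum_le_sum
                intro x hx
                rw [Finset.mem_filter] at hx
                have hsub : Dj j ⊆ (E (ι (x, φ i x)))ᶜ := by
                  intro y hy
                  rw [hDj] at hy
                  rw [Finset.mem_biUnion] at hy
                  obtain ⟨x', _, hy'⟩ := hy
                  rw [Finset.mem_compl]
                  intro hyE
                  have hne : ι (x', φ j x') ≠ ι (x, φ i x) := by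
                    intro he
                    have h2 := hι he
                    rw [Prod.ext_iff] at h2
                    obtain ⟨h3, h4⟩ := h2
                    dsimp at h3 h4
                    subst h3
                    exact hx.2 h4.symm
                  exact (Finset.disjoint_left.mp (hdisj _ _ hne) hy') hyE
                exact (setProb_mono hW _ hsub).trans (herr _)
            _ ≤ δ * L := by
                rw [Finset.sum_const, nsmul_eq_mul, mul_comm]
                apply mul_le_mul_of_nonneg_left _ hδ0
                exact_mod_cast (Finset.card_filter_le _ _).trans (le_of_eq (by simp))
        linarith
      calc ∑ x : Fin L, ∑ y ∈ ((Finset.univ.filter fun j => f j = true).biUnion Dj),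
            W (g i x) y
          ≤ ∑ j ∈ (Finset.univ.filter fun j => f j = true), (μ + δ) * L := by
            exact step1.trans (Finset.sum_le_sum step2)
        _ = ((Finset.univ.filter fun j => f j = true).card : ℝ) * ((μ + δ) * L) := by
            rw [Finset.sum_const, nsmul_eq_mul]
        _ ≤ (c : ℝ) * ((μ + δ) * L) := by
            apply mul_le_mul_of_nonneg_right _ (by positivity)
            exact_mod_cast hwc
        _ = ((c : ℝ) * (μ + δ)) * L := by ring
        _ ≤ lam2 * L := mul_le_mul_of_nonneg_right hsum (Nat.cast_nonneg L)

/-- Achievability, Case 1: for constant Hamming weight bound `c`, the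
computation rate `C` is achievable with scaling function `L(R,n) = 2^{Rn}`. -/
theorem achievability_case1 {𝒳 𝒴 : Type*}
    [Fintype 𝒳] [DecidableEq 𝒳] [Fintype 𝒴] [DecidableEq 𝒴]
    (W : ∀ n : ℕ, (Fin n → 𝒳) → (Fin n → 𝒴) → ℝ) (hW : ∀ n, IsChannel (W n))
    (C : ℝ) (hC : 0 < C) (hrate : SupportsRate W C)
    (c : ℕ) (hc : 0 < c)
    (lam1 : ℝ) (hl1 : 0 < lam1) (hl1' : lam1 < 1)
    (lam2 : ℝ) (hl2 : 0 < lam2) (hl2' : lam2 < 1)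
    (γ : ℝ) (hγ0 : 0 < γ) (hγC : γ < C) :
    ∃ n₀ : ℕ, ∀ n ≥ n₀, ∃ m : ℕ, 0 < m ∧
      (2:ℝ) ^ ((C - γ) * (n : ℝ)) < (m : ℝ) ∧
      ∃ (Q : (Fin m → Bool) → (Fin n → 𝒳) → ℝ)
        (D : ((Fin m → Bool) → Bool) → Finset (Fin n → 𝒴)),
        IsBFCCode (W n) (FleNat m c) Q D lam1 lam2 := by
  classical
  have hc' : (0:ℝ) < c := by exact_mod_cast hc
  set μ : ℝ := lam2 / (4 * c) with hμdef
  have hμ : 0 < μ := by positivity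
  have hμ1 : μ < 1 := by
    rw [hμdef, div_lt_one (by positivity)]
    have h1 : (1:ℝ) ≤ c := by exact_mod_cast hc
    nlinarith
  set δ : ℝ := min lam1 (min μ (1/4)) with hδdef
  have hδ0 : 0 < δ := lt_min hl1 (lt_min hμ (by norm_num))
  have hδl1 : δ ≤ lam1 := min_le_left _ _
  have hδμ : δ ≤ μ := le_trans (min_le_right _ _) (min_le_left _ _)
  have hδ12 : δ < 1/2 :=
    lt_of_le_of_lt (le_trans (min_le_right _ _) (min_le_right _ _)) (by norm_num)
  set k : ℕ := ⌈2/μ⌉₊ with hkdef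
  have hk2 : 2 ≤ (k:ℝ) * μ := by
    have h := Nat.le_ceil (2/μ)
    rw [div_le_iff₀ hμ] at h
    rw [hkdef]
    exact h
  obtain ⟨nr, hnr⟩ := hrate (γ/2) (by positivity) δ hδ0 hδ12
  set n₁ : ℕ := ⌈(2*((k:ℝ)+2))/γ⌉₊ with hn₁def
  refine ⟨max nr n₁, fun n hn => ?_⟩
  obtain ⟨u, E, hu, hdisj, herr⟩ := hnr n (le_trans (le_max_left _ _) hn)
  set M : ℕ := ⌈(2:ℝ) ^ ((n : ℝ) * (C - γ/2))⌉₊ with hMdef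
  set L : ℕ := M / 2^k with hLdef
  -- real estimates
  have hM1 : (2:ℝ) ^ ((n : ℝ) * (C - γ/2)) ≤ (M:ℝ) := Nat.le_ceil _
  set A : ℝ := (2:ℝ) ^ ((C - γ) * (n:ℝ)) with hAdef
  have hA1 : (1:ℝ) ≤ A := by
    rw [hAdef, show (1:ℝ) = (2:ℝ)^(0:ℝ) from (Real.rpow_zero 2).symm]
    exact Real.rpow_le_rpow_of_exponent_le one_le_two
      (mul_nonneg (sub_nonneg.mpr hγC.le) (Nat.cast_nonneg n))
  have hsplit : (2:ℝ) ^ ((n : ℝ) * (C - γ/2)) = A * (2:ℝ) ^ ((n:ℝ) * (γ/2)) := by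
    rw [hAdef, ← Real.rpow_add two_pos]
    congr 1
    ring
  have hnγ : (k:ℝ) + 2 ≤ (n:ℝ) * (γ/2) := by
    have h1 : (2*((k:ℝ)+2))/γ ≤ (n₁ : ℝ) := Nat.le_ceil _
    have h2 : (n₁ : ℝ) ≤ n := by
      exact_mod_cast le_trans (le_max_right nr n₁) hn
    rw [div_le_iff₀ hγ0] at h1
    nlinarith
  have hpow : ((2:ℝ)^k) * 4 ≤ (2:ℝ) ^ ((n:ℝ) * (γ/2)) := by
    have h1 : (2:ℝ) ^ ((k:ℝ)+2) ≤ (2:ℝ) ^ ((n:ℝ) * (γ/2)) :=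
      Real.rpow_le_rpow_of_exponent_le one_le_two hnγ
    have h2 : (2:ℝ) ^ ((k:ℝ)+2) = ((2:ℝ)^k) * 4 := by
      rw [show ((k:ℝ)+2) = ((k+2 : ℕ) : ℝ) by push_cast; ring, Real.rpow_natCast]
      rw [pow_add]
      norm_num
    linarith
  have hMA : A * (2^k * 4 : ℝ) ≤ (M:ℝ) := by
    calc A * ((2:ℝ)^k * 4) ≤ A * (2:ℝ) ^ ((n:ℝ) * (γ/2)) :=
        mul_le_mul_of_nonneg_left hpow (by linarith)
      _ = (2:ℝ) ^ ((n : ℝ) * (C - γ/2)) := hsplit.symm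
      _ ≤ M := hM1
  have hBpos : (0:ℝ) < (2:ℝ)^k := by positivity
  have hdm : 2^k * L + M % 2^k = M := Nat.div_add_mod M (2^k)
  have hmod : M % 2^k < 2^k := Nat.mod_lt _ (by positivity)
  have hdmR : (2:ℝ)^k * (L:ℝ) + ((M % 2^k : ℕ):ℝ) = (M:ℝ) := by exact_mod_cast hdm
  have hmodR : ((M % 2^k : ℕ):ℝ) < (2:ℝ)^k := by exact_mod_cast hmod
  have hMA' : (2:ℝ)^k * (4*A) ≤ (M:ℝ) := by
    rw [show (2:ℝ)^k*(4*A) = A*((2:ℝ)^k*4) by ring]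
    exact hMA
  have hBL : (2:ℝ)^k*(4*A) < (2:ℝ)^k*((L:ℝ)+1) := by
    rw [mul_add, mul_one]
    linarith
  have h4A : 4*A < (L:ℝ) + 1 := lt_of_mul_lt_mul_left hBL hBpos.le
  have hAL : A < (L:ℝ) := by linarith
  have hL0 : 0 < L := by
    have : (0:ℝ) < (L:ℝ) := by linarith
    exact_mod_cast this
  have hLR : (0:ℝ) < (L:ℝ) := by exact_mod_cast hL0
  -- the code parameters
  set s : ℕ := ⌊μ * L⌋₊ + 1 with hsdef
  have hsL : s ≤ L := by
    have h1 : μ * (L:ℝ) < (L:ℝ) := by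
      have := mul_lt_mul_of_pos_right hμ1 hLR
      rwa [one_mul] at this
    have h2 : ⌊μ * L⌋₊ < L := by
      rw [Nat.floor_lt (by positivity)]
      exact_mod_cast h1
    omega
  have hks : 2 * L ≤ k * s := by
    have h1 : μ * (L:ℝ) < (s:ℝ) := by
      rw [hsdef]
      push_cast
      exact Nat.lt_floor_add_one _
    have h2 : (2:ℝ) * L ≤ (k:ℝ) * s := by
      calc (2:ℝ) * L ≤ ((k:ℝ) * μ) * L :=
            mul_le_mul_of_nonneg_right hk2 (Nat.cast_nonneg L)
        _ = (k:ℝ) * (μ * L) := by ring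
        _ ≤ (k:ℝ) * s := mul_le_mul_of_nonneg_left h1.le (Nat.cast_nonneg k)
    exact_mod_cast h2
  obtain ⟨S, hScard, hSagree⟩ := exists_code L k s hsL hks
  -- embedding of messages into the code
  have hcard : Fintype.card (Fin L → Bool) ≤ Fintype.card {x // x ∈ S} := by
    rw [Fintype.card_fun, Fintype.card_coe]
    simpa using hScard
  obtain ⟨emb⟩ := Function.Embedding.nonempty_of_card_le hcard
  set φ : (Fin L → Bool) → (Fin L → Fin (2^k)) := fun i => (emb i : Fin L → Fin (2^k))
    with hφdef
  have hφinj : Function.Injective φ := fun a b h => emb.injective (Subtype.ext h)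
  have hφ : ∀ i j, i ≠ j → (agreeCard (φ i) (φ j) : ℝ) ≤ μ * L := by
    intro i j hij
    have h1 : agreeCard (φ i) (φ j) < s :=
      hSagree _ (emb i).2 _ (emb j).2 (fun h => hij (hφinj h))
    have h2 : agreeCard (φ i) (φ j) ≤ ⌊μ * L⌋₊ := by omega
    calc (agreeCard (φ i) (φ j) : ℝ) ≤ (⌊μ * L⌋₊ : ℝ) := by exact_mod_cast h2
      _ ≤ μ * L := Nat.floor_le (by positivity)
  -- pair encoding
  have hLM : L * 2^k ≤ M := Nat.div_mul_le_self M (2^k)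
  set ι : Fin L × Fin (2^k) → Fin M := fun p => Fin.castLE hLM (finProdFinEquiv p) with hιdef
  have hιinj : Function.Injective ι :=
    (Fin.castLE_injective hLM).comp finProdFinEquiv.injective
  -- conclude
  refine ⟨L, hL0, hAL, ?_⟩
  have hsum : (c:ℝ)*(μ+δ) ≤ lam2 := by
    have h1 : (c:ℝ)*(μ+δ) ≤ (c:ℝ)*(2*μ) := mul_le_mul_of_nonneg_left (by linarith) hc'.le
    have h2 : (c:ℝ)*(2*μ) = lam2/2 := by
      rw [hμdef]
      field_simp
      ring
    linarith
  exact bfc_construct hL0 (hW n) hδ0.le hdisj herr ι hιinj φ μ hμ.le hφ lam1 lam2 hδl1 hsum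
end

section
/- Fix finite alphabets 𝒳, 𝒴 and a family of channels (W_n)_{n ∈ ℕ} that supports rate C > 0. Let c > 0 and β > 0 be fixed real constants. Then for all λ1, λ2 ∈ (0,1) and all γ ∈ (0, C/(1+2β)), for every sufficiently large n there exist a positive integer m with m > 2^{(C/(1+2β)−γ)n} and an (n, m, ℱ_m^W(≤ c·m^β), λ1, λ2) BFC code for W_n. (Achievability, Case 2: the computation rate C/(1+2β) is achievable for the class ℱ_m^W(≤ c·m^β) with scaling function L(R,n) = 2^{Rn}.) -/
open Finset

section BFCAux
open Nat

lemma bfc_succ_pow_le (k : ℕ) : (k+1)^k ≤ 3 * k^k := by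
  rcases Nat.eq_zero_or_pos k with h | h
  · simp [h]
  have hk : (0:ℝ) < k := by exact_mod_cast h
  have key : ((k:ℝ)+1)^k ≤ 3 * (k:ℝ)^k := by
    have h1 : ((k:ℝ)+1)^k = (1 + 1/(k:ℝ))^k * (k:ℝ)^k := by
      rw [← mul_pow]; congr 1; field_simp
    have h2 : (1 + 1/(k:ℝ))^k ≤ Real.exp 1 := by
      calc (1 + 1/(k:ℝ))^k ≤ (Real.exp (1/(k:ℝ)))^k := by
            apply pow_le_pow_left₀ (by positivity)
            linarith [Real.add_one_le_exp (1/(k:ℝ))]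
        _ = Real.exp ((1/(k:ℝ)) * k) := by
            rw [← Real.exp_nat_mul]; ring_nf
        _ = Real.exp 1 := by rw [one_div, inv_mul_cancel₀ (ne_of_gt hk)]
    have h3 : Real.exp 1 ≤ 3 := by
      have := Real.exp_one_lt_d9; linarith
    have hkk : (0:ℝ) ≤ (k:ℝ)^k := by positivity
    calc ((k:ℝ)+1)^k = (1 + 1/(k:ℝ))^k * (k:ℝ)^k := h1
      _ ≤ 3 * (k:ℝ)^k := by
          apply mul_le_mul_of_nonneg_right _ hkk
          exact h2.trans h3
  exact_mod_cast key

lemma bfc_pow_self_le (m : ℕ) : m ^ m ≤ 3 ^ m * m ! := by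
  induction m with
  | zero => simp
  | succ k ih =>
    calc (k+1)^(k+1) = (k+1)^k * (k+1) := by rw [pow_succ]
      _ ≤ (3 * k^k) * (k+1) := by
          exact Nat.mul_le_mul_right _ (bfc_succ_pow_le k)
      _ ≤ (3 * (3^k * k !)) * (k+1) := by
          exact Nat.mul_le_mul_right _ (Nat.mul_le_mul_left _ ih)
      _ = 3^(k+1) * (k+1)! := by
          rw [Nat.factorial_succ, pow_succ]; ring

lemma bfc_key_choose (m q M : ℕ) (hm : 1 ≤ m) (hmq : m ≤ q)
    (h : 18*q^2 + m*m ≤ m*M) : 2^m * (q.choose m)^2 ≤ M.choose m := by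
  have hmM : m ≤ M := by nlinarith
  have h18 : 18*q^2 ≤ m*(M-m) := by
    have h2 : m*(M-m) = m*M - m*m := by rw [Nat.mul_sub]
    omega
  have hpos : 0 < (3^m * m !)^2 := by positivity
  apply Nat.le_of_mul_le_mul_right _ hpos
  have e1 : m ! * q.choose m = q.descFactorial m :=
    (Nat.descFactorial_eq_factorial_mul_choose q m).symm
  calc 2^m * (q.choose m)^2 * (3^m * m !)^2
      = 18^m * (m ! * q.choose m)^2 := by
        ring_nf
        rw [show (18:ℕ) = 2*3^2 by norm_num, mul_pow, ← pow_mul]; ring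
    _ ≤ 18^m * (q^m)^2 := by
        apply Nat.mul_le_mul_left
        exact Nat.pow_le_pow_left (e1 ▸ Nat.descFactorial_le_pow q m) 2
    _ = (18*q^2)^m := by rw [mul_pow, ← pow_mul, ← pow_mul']
    _ ≤ (m*(M-m))^m := Nat.pow_le_pow_left h18 m
    _ = m^m * (M-m)^m := mul_pow m (M-m) m
    _ ≤ (3^m * m !) * (M-m)^m := Nat.mul_le_mul_right _ (bfc_pow_self_le m)
    _ ≤ (3^m * m !) * M.descFactorial m := by
        apply Nat.mul_le_mul_left
        calc (M-m)^m ≤ (M+1-m)^m := Nat.pow_le_pow_left (by omega) m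
          _ ≤ M.descFactorial m := Nat.pow_sub_le_descFactorial M m
    _ = (3^m * m !) * (m ! * M.choose m) := by
        rw [Nat.descFactorial_eq_factorial_mul_choose]
    _ ≤ M.choose m * (3^m * m !)^2 := by
        have : m ! ≤ 3^m * m ! := Nat.le_mul_of_pos_left _ (by positivity)
        calc (3^m * m !) * (m ! * M.choose m)
            ≤ (3^m * m !) * ((3^m * m !) * M.choose m) := by
              exact Nat.mul_le_mul_left _ (Nat.mul_le_mul_right _ this)
          _ = M.choose m * (3^m * m !)^2 := by ring

lemma bfc_count_conflict {M : ℕ} (q r : ℕ) (A : Finset (Fin M)) (hA : A.card = q) :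
    ((powersetCard q (univ : Finset (Fin M))).filter fun B => r ≤ (A ∩ B).card).card
      ≤ q.choose r * (M - r).choose (q - r) := by
  classical
  have hsub : ((powersetCard q (univ : Finset (Fin M))).filter fun B => r ≤ (A ∩ B).card) ⊆
      (powersetCard r A).biUnion
        (fun T => (powersetCard q (univ : Finset (Fin M))).filter fun B => T ⊆ B) := by
    intro B hB
    rw [mem_filter] at hB
    obtain ⟨T, hT1, hT2⟩ := Finset.exists_subset_card_eq hB.2
    refine mem_biUnion.mpr ⟨T, ?_, ?_⟩
    · exact mem_powersetCard.mpr ⟨hT1.trans inter_subset_left, hT2⟩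
    · exact mem_filter.mpr ⟨hB.1, hT1.trans inter_subset_right⟩
  have hper : ∀ T ∈ powersetCard r A,
      ((powersetCard q (univ : Finset (Fin M))).filter fun B => T ⊆ B).card
        ≤ (M - r).choose (q - r) := by
    intro T hT
    rw [mem_powersetCard] at hT
    calc ((powersetCard q (univ : Finset (Fin M))).filter fun B => T ⊆ B).card
        ≤ (powersetCard (q - r) ((univ : Finset (Fin M)) \ T)).card := by
          apply Finset.card_le_card_of_injOn (fun B => B \ T)
          · intro B hB
            rw [mem_coe, mem_filter, mem_powersetCard] at hB
            refine mem_powersetCard.mpr ⟨sdiff_subset_sdiff (subset_univ B) Subset.rfl, ?_⟩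
            rw [card_sdiff_of_subset hB.2, hB.1.2, hT.2]
          · intro B1 h1 B2 h2 heq
            rw [mem_coe, mem_filter] at h1 h2
            have e1 : B1 = B1 \ T ∪ T := (sdiff_union_of_subset h1.2).symm
            have e2 : B2 = B2 \ T ∪ T := (sdiff_union_of_subset h2.2).symm
            rw [e1, e2]; exact congrArg (fun s => s ∪ T) heq
      _ = (M - r).choose (q - r) := by
          rw [card_powersetCard, card_sdiff_of_subset (subset_univ T), Finset.card_univ, Fintype.card_fin, hT.2]
  calc ((powersetCard q (univ : Finset (Fin M))).filter fun B => r ≤ (A ∩ B).card).card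
      ≤ ((powersetCard r A).biUnion
          (fun T => (powersetCard q (univ : Finset (Fin M))).filter fun B => T ⊆ B)).card :=
        card_le_card hsub
    _ ≤ (powersetCard r A).card * ((M - r).choose (q - r)) :=
        card_biUnion_le_card_mul _ _ _ hper
    _ = q.choose r * (M - r).choose (q - r) := by rw [card_powersetCard, hA]

lemma bfc_exists_packing (M q r N : ℕ) (hr : 1 ≤ r) (hrq : r ≤ q) (hqM : q ≤ M)
    (hineq : N * (q.choose r * (M - r).choose (q - r)) ≤ M.choose q) :
    ∃ 𝒜 : Finset (Finset (Fin M)), N ≤ 𝒜.card ∧ (∀ A ∈ 𝒜, A.card = q) ∧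
      ∀ A ∈ 𝒜, ∀ B ∈ 𝒜, A ≠ B → (A ∩ B).card < r := by
  classical
  set Good : Finset (Finset (Fin M)) → Prop := fun F =>
    (∀ A ∈ F, A.card = q) ∧ ∀ A ∈ F, ∀ B ∈ F, A ≠ B → (A ∩ B).card < r with hGoodDef
  have h0 : Good ∅ := ⟨by simp, by simp⟩
  obtain ⟨F, hFmem, hFmax⟩ := Finset.exists_max_image (β := Finset (Finset (Fin M)))
    (Finset.univ.filter fun F => Good F) (fun F => F.card)
    ⟨∅, mem_filter.mpr ⟨mem_univ _, h0⟩⟩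
  rw [mem_filter] at hFmem
  have hFgood := hFmem.2
  refine ⟨F, ?_, hFgood.1, hFgood.2⟩
  have hcover : ∀ B ∈ powersetCard q (univ : Finset (Fin M)), ∃ A ∈ F, r ≤ (A ∩ B).card := by
    intro B hB
    by_contra hcon
    push_neg at hcon
    have hBq : B.card = q := (mem_powersetCard.mp hB).2
    have hBF : B ∉ F := by
      intro hBF
      have := hcon B hBF
      rw [inter_self, hBq] at this
      omega
    have hGood' : Good (insert B F) := by
      constructor
      · intro A hA
        rcases mem_insert.mp hA with h1 | h1
        · rw [h1]; exact hBq
        · exact hFgood.1 A h1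
      · intro A hA A' hA' hne
        rcases mem_insert.mp hA with h1 | h1 <;> rcases mem_insert.mp hA' with h2 | h2
        · exact absurd (h1.trans h2.symm) hne
        · rw [h1, inter_comm]
          have := hcon A' h2
          omega
        · rw [h2]
          have := hcon A h1
          omega
        · exact hFgood.2 A h1 A' h2 hne
    have hle := hFmax (insert B F) (mem_filter.mpr ⟨mem_univ _, hGood'⟩)
    rw [card_insert_of_notMem hBF] at hle
    omega
  have hsub : powersetCard q (univ : Finset (Fin M)) ⊆
      F.biUnion (fun A =>
        (powersetCard q (univ : Finset (Fin M))).filter fun B => r ≤ (A ∩ B).card) := by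
    intro B hB
    obtain ⟨A, hAF, hAr⟩ := hcover B hB
    exact mem_biUnion.mpr ⟨A, hAF, mem_filter.mpr ⟨hB, hAr⟩⟩
  have hcount : M.choose q ≤ F.card * (q.choose r * (M - r).choose (q - r)) := by
    calc M.choose q = (powersetCard q (univ : Finset (Fin M))).card := by
          rw [card_powersetCard, Finset.card_univ, Fintype.card_fin]
      _ ≤ (F.biUnion (fun A =>
            (powersetCard q (univ : Finset (Fin M))).filter fun B => r ≤ (A ∩ B).card)).card :=
          card_le_card hsub
      _ ≤ F.card * (q.choose r * (M - r).choose (q - r)) :=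
          card_biUnion_le_card_mul _ _ _ (fun A hA => bfc_count_conflict q r A (hFgood.1 A hA))
  have hXpos : 0 < q.choose r * (M - r).choose (q - r) :=
    Nat.mul_pos (Nat.choose_pos hrq) (Nat.choose_pos (by omega))
  have := hineq.trans hcount
  exact Nat.le_of_mul_le_mul_right this hXpos

lemma bfc_exists_family (M q m : ℕ) (hm : 1 ≤ m) (hmq : m ≤ q)
    (h : 18*q^2 + m*m ≤ m*M) :
    ∃ A : (Fin m → Bool) → Finset (Fin M),
      (∀ i, (A i).card = q) ∧ ∀ i j, i ≠ j → ((A i) ∩ (A j)).card < m := by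
  classical
  have hq0 : 0 < q := hm.trans hmq
  have hqM : q ≤ M := by
    have h1 : q * q ≤ m * M := by nlinarith
    have h2 : m * M ≤ q * M := Nat.mul_le_mul_right M hmq
    exact Nat.le_of_mul_le_mul_left (by
      calc q * q ≤ m * M := h1
        _ ≤ q * M := h2) hq0
  have hkey := bfc_key_choose m q M hm hmq h
  have hmM : m ≤ M := hmq.trans hqM
  have e1 : M.choose m * m ! * (M - m)! = M ! := Nat.choose_mul_factorial_mul_factorial hmM
  have e2 : (M - m).choose (q - m) * (q - m)! * (M - q)! = (M - m)! := by
    have h5 := Nat.choose_mul_factorial_mul_factorial (show q - m ≤ M - m by omega)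
    rwa [show M - m - (q - m) = M - q by omega] at h5
  have e3 : M.choose q * q ! * (M - q)! = M ! := Nat.choose_mul_factorial_mul_factorial hqM
  have e4 : q.choose m * m ! * (q - m)! = q ! := Nat.choose_mul_factorial_mul_factorial hmq
  have hid : M.choose m * (M - m).choose (q - m) * (m ! * (q - m)! * (M - q)!)
      = M.choose q * q.choose m * (m ! * (q - m)! * (M - q)!) := by
    calc M.choose m * (M - m).choose (q - m) * (m ! * (q - m)! * (M - q)!)
        = (M.choose m * m !) * ((M - m).choose (q - m) * (q - m)! * (M - q)!) := by ring
      _ = (M.choose m * m !) * (M - m)! := by rw [e2]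
      _ = M ! := by rw [← e1]
      _ = (M.choose q * (M - q)!) * q ! := by rw [← e3]; ring
      _ = (M.choose q * (M - q)!) * (q.choose m * m ! * (q - m)!) := by rw [e4]
      _ = _ := by ring
  have hpackhyp : 2^m * (q.choose m * (M - m).choose (q - m)) ≤ M.choose q := by
    have hKpos : 0 < q.choose m * (m ! * (q - m)! * (M - q)!) :=
      Nat.mul_pos (Nat.choose_pos hmq)
        (Nat.mul_pos (Nat.mul_pos (Nat.factorial_pos m) (Nat.factorial_pos (q - m)))
          (Nat.factorial_pos (M - q)))
    apply Nat.le_of_mul_le_mul_right _ hKpos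
    calc 2^m * (q.choose m * (M - m).choose (q - m)) * (q.choose m * (m ! * (q-m)! * (M-q)!))
        = (2^m * (q.choose m)^2) * ((M - m).choose (q - m) * (m ! * (q-m)! * (M-q)!)) := by
          ring
      _ ≤ M.choose m * ((M - m).choose (q - m) * (m ! * (q-m)! * (M-q)!)) :=
          Nat.mul_le_mul_right _ hkey
      _ = M.choose m * (M - m).choose (q - m) * (m ! * (q-m)! * (M-q)!) := by ring
      _ = M.choose q * q.choose m * (m ! * (q-m)! * (M-q)!) := hid
      _ = M.choose q * (q.choose m * (m ! * (q-m)! * (M-q)!)) := by ring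
  obtain ⟨𝒜, hcard, hqA, hint⟩ := bfc_exists_packing M q m (2^m) hm hmq hqM hpackhyp
  have hcard2 : Fintype.card (Fin m → Bool) ≤ Fintype.card {A // A ∈ 𝒜} := by
    rw [Fintype.card_coe, Fintype.card_fun, Fintype.card_bool, Fintype.card_fin]
    exact hcard
  obtain ⟨ι⟩ := Function.Embedding.nonempty_of_card_le hcard2
  refine ⟨fun i => (ι i : Finset (Fin M)), fun i => hqA _ (ι i).2, fun i j hij => ?_⟩
  apply hint _ (ι i).2 _ (ι j).2
  intro hEq
  exact hij (ι.injective (Subtype.ext hEq))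

end BFCAux

lemma bfc_construct_s4 {𝒳 𝒴 : Type*} [Fintype 𝒳] [Fintype 𝒴] [DecidableEq 𝒳] [DecidableEq 𝒴]
    {n m M : ℕ}
    (W : (Fin n → 𝒳) → (Fin n → 𝒴) → ℝ) (hW : IsChannel W)
    (u : Fin M → (Fin n → 𝒳)) (E : Fin M → Finset (Fin n → 𝒴)) (δ : ℝ) (hδ0 : 0 ≤ δ)
    (hcode : IsTransmissionCode W u E δ)
    (A : (Fin m → Bool) → Finset (Fin M)) (q : ℕ) (hq0 : 0 < q)
    (hAcard : ∀ i, (A i).card = q)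
    (hAint : ∀ i j, i ≠ j → ((A i) ∩ (A j)).card < m)
    (S lam1 lam2 : ℝ) (hS0 : 0 ≤ S)
    (hδ1 : δ ≤ lam1) (hδ2 : δ ≤ lam2 / 2)
    (hover : S * (m : ℝ) / (q : ℝ) ≤ lam2 / 2) :
    ∃ (Q : (Fin m → Bool) → (Fin n → 𝒳) → ℝ)
      (D : ((Fin m → Bool) → Bool) → Finset (Fin n → 𝒴)),
      IsBFCCode W (FleR m S) Q D lam1 lam2 := by
  classical
  have hqR : (0:ℝ) < q := by exact_mod_cast hq0
  have hWnn : ∀ xx y, 0 ≤ W xx y := fun xx => (hW xx).1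
  have hWsum : ∀ xx, ∑ y, W xx y = 1 := fun xx => (hW xx).2
  have hmono : ∀ (xx) (D1 D2 : Finset (Fin n → 𝒴)), D1 ⊆ D2 →
      ∑ y ∈ D1, W xx y ≤ ∑ y ∈ D2, W xx y := fun xx D1 D2 h =>
    Finset.sum_le_sum_of_subset_of_nonneg h (fun y _ _ => hWnn xx y)
  have hWsub : ∀ (xx) (Dset : Finset (Fin n → 𝒴)), ∑ y ∈ Dset, W xx y ≤ 1 := by
    intro xx Dset
    calc ∑ y ∈ Dset, W xx y ≤ ∑ y, W xx y := hmono xx Dset univ (subset_univ _)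
      _ = 1 := hWsum xx
  set Q : (Fin m → Bool) → (Fin n → 𝒳) → ℝ :=
    fun i y => (((A i).filter (fun k => u k = y)).card : ℝ) / q with hQdef
  set T : ((Fin m → Bool) → Bool) → Finset (Fin M) :=
    fun f => (univ.filter fun j => f j = true).biUnion A with hTdef
  set D : ((Fin m → Bool) → Bool) → Finset (Fin n → 𝒴) :=
    fun f => (T f).biUnion E with hDdef
  have hout : ∀ (i : Fin m → Bool) (Dset : Finset (Fin n → 𝒴)),
      outProb W (Q i) Dset = (∑ k ∈ A i, ∑ y ∈ Dset, W (u k) y) / q := by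
    intro i Dset
    unfold outProb
    have hfib : ∀ x : Fin n → 𝒳,
        ∑ k ∈ (A i).filter (fun k => u k = x), (∑ y ∈ Dset, W (u k) y)
          = (((A i).filter (fun k => u k = x)).card : ℝ) * ∑ y ∈ Dset, W x y := by
      intro x
      have hcg : ∀ k ∈ (A i).filter (fun k' => u k' = x),
          (∑ y ∈ Dset, W (u k) y) = ∑ y ∈ Dset, W x y := by
        intro k hk
        rw [(Finset.mem_filter.mp hk).2]
      rw [Finset.sum_congr rfl hcg, Finset.sum_const, nsmul_eq_mul]
    calc ∑ x, Q i x * ∑ y ∈ Dset, W x y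
        = ∑ x, ((((A i).filter (fun k => u k = x)).card : ℝ) * ∑ y ∈ Dset, W x y) / q := by
          apply Finset.sum_congr rfl
          intro x _
          rw [hQdef]
          rw [div_mul_eq_mul_div]
      _ = (∑ x, (((A i).filter (fun k => u k = x)).card : ℝ) * ∑ y ∈ Dset, W x y) / q := by
          rw [Finset.sum_div]
      _ = (∑ k ∈ A i, ∑ y ∈ Dset, W (u k) y) / q := by
          congr 1
          rw [← Finset.sum_fiberwise_of_maps_to (g := u)
            (fun k (_ : k ∈ A i) => mem_univ (u k)) (fun k => ∑ y ∈ Dset, W (u k) y)]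
          exact Finset.sum_congr rfl (fun x _ => (hfib x).symm)
  refine ⟨Q, D, ?_, ?_⟩
  · -- PMF
    intro i
    constructor
    · intro y
      rw [hQdef]
      positivity
    · have hcnt : (A i).card = ∑ y : Fin n → 𝒳, ((A i).filter (fun k => u k = y)).card :=
        Finset.card_eq_sum_card_fiberwise (fun k _ => mem_univ (u k))
      have : ∑ y : Fin n → 𝒳, Q i y
          = (∑ y : Fin n → 𝒳, (((A i).filter (fun k => u k = y)).card : ℝ)) / q := by
        rw [hQdef, Finset.sum_div]
      rw [this]
      rw [show (∑ y : Fin n → 𝒳, (((A i).filter (fun k => u k = y)).card : ℝ))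
          = ((A i).card : ℝ) by exact_mod_cast congrArg Nat.cast hcnt.symm]
      rw [hAcard i]
      exact div_self (ne_of_gt hqR)
  · intro i f hf
    have hwt : (hammingWeight f : ℝ) ≤ S := hf
    constructor
    · -- false negative
      intro hfi
      rw [hout]
      have hterm : ∀ k ∈ A i, ∑ y ∈ (D f)ᶜ, W (u k) y ≤ δ := by
        intro k hk
        have hkT : k ∈ T f := by
          rw [hTdef]
          exact mem_biUnion.mpr ⟨i, mem_filter.mpr ⟨mem_univ i, hfi⟩, hk⟩
        have hE : E k ⊆ D f := by
          rw [hDdef]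
          exact Finset.subset_biUnion_of_mem E hkT
        have hcompl : (D f)ᶜ ⊆ (E k)ᶜ := by
          intro y hy
          rw [Finset.mem_compl] at hy ⊢
          exact fun hyE => hy (hE hyE)
        calc ∑ y ∈ (D f)ᶜ, W (u k) y ≤ ∑ y ∈ (E k)ᶜ, W (u k) y :=
              hmono (u k) _ _ hcompl
          _ ≤ δ := hcode.2.2 k
      have hsum : ∑ k ∈ A i, ∑ y ∈ (D f)ᶜ, W (u k) y ≤ (q : ℝ) * δ := by
        calc ∑ k ∈ A i, ∑ y ∈ (D f)ᶜ, W (u k) y ≤ (A i).card • δ :=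
              Finset.sum_le_card_nsmul _ _ _ hterm
          _ = (q : ℝ) * δ := by rw [hAcard i, nsmul_eq_mul]
      calc (∑ k ∈ A i, ∑ y ∈ (D f)ᶜ, W (u k) y) / q ≤ ((q : ℝ) * δ) / q := by
            exact (div_le_div_iff_of_pos_right hqR).mpr hsum
        _ = δ := by field_simp
        _ ≤ lam1 := hδ1
    · -- false positive
      intro hfi
      rw [hout]
      set P : Finset (Fin M) := (A i).filter (fun k => k ∈ T f) with hPdef
      have hsplit : ∑ k ∈ A i, ∑ y ∈ D f, W (u k) y
          = ∑ k ∈ P, ∑ y ∈ D f, W (u k) y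
            + ∑ k ∈ (A i).filter (fun k => ¬ (k ∈ T f)), ∑ y ∈ D f, W (u k) y :=
        (Finset.sum_filter_add_sum_filter_not _ _ _).symm
      have hb1 : ∑ k ∈ P, ∑ y ∈ D f, W (u k) y ≤ (P.card : ℝ) := by
        calc ∑ k ∈ P, ∑ y ∈ D f, W (u k) y ≤ P.card • (1:ℝ) :=
              Finset.sum_le_card_nsmul _ _ _ (fun k _ => hWsub (u k) (D f))
          _ = (P.card : ℝ) := by rw [nsmul_eq_mul, mul_one]
      have hb2 : ∑ k ∈ (A i).filter (fun k => ¬ (k ∈ T f)), ∑ y ∈ D f, W (u k) y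
          ≤ (q : ℝ) * δ := by
        have hterm : ∀ k ∈ (A i).filter (fun k => ¬ (k ∈ T f)),
            ∑ y ∈ D f, W (u k) y ≤ δ := by
          intro k hk
          have hkT : k ∉ T f := (Finset.mem_filter.mp hk).2
          have hDsub : D f ⊆ (E k)ᶜ := by
            intro y hy
            rw [hDdef] at hy
            obtain ⟨k', hk'T, hyE⟩ := mem_biUnion.mp hy
            have hne : k' ≠ k := fun h => hkT (h ▸ hk'T)
            rw [Finset.mem_compl]
            exact fun hyEk => (Finset.disjoint_left.mp (hcode.2.1 k' k hne)) hyE hyEk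
          calc ∑ y ∈ D f, W (u k) y ≤ ∑ y ∈ (E k)ᶜ, W (u k) y := hmono (u k) _ _ hDsub
            _ ≤ δ := hcode.2.2 k
        calc ∑ k ∈ (A i).filter (fun k => ¬ (k ∈ T f)), ∑ y ∈ D f, W (u k) y
            ≤ ((A i).filter (fun k => ¬ (k ∈ T f))).card • δ :=
              Finset.sum_le_card_nsmul _ _ _ hterm
          _ ≤ (q : ℝ) * δ := by
              rw [nsmul_eq_mul]
              apply mul_le_mul_of_nonneg_right ?_ hδ0
              · have := Finset.card_filter_le (A i) (fun k => ¬ (k ∈ T f))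
                rw [hAcard i] at this
                exact_mod_cast this
      have hPcard : (P.card : ℝ) ≤ S * (m : ℝ) := by
        have hsub2 : P ⊆ (univ.filter fun j => f j = true).biUnion (fun j => A i ∩ A j) := by
          intro k hk
          rw [hPdef, Finset.mem_filter] at hk
          have hk2 := hk.2
          rw [hTdef] at hk2
          obtain ⟨j, hjS, hkj⟩ := mem_biUnion.mp hk2
          exact mem_biUnion.mpr ⟨j, hjS, Finset.mem_inter.mpr ⟨hk.1, hkj⟩⟩
        have hcnt : P.card ≤ (univ.filter fun j => f j = true).card * m := by
          calc P.card ≤ ((univ.filter fun j => f j = true).biUnion (fun j => A i ∩ A j)).card :=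
                Finset.card_le_card hsub2
            _ ≤ (univ.filter fun j => f j = true).card * m := by
                apply Finset.card_biUnion_le_card_mul
                intro j hj
                have hji : j ≠ i := by
                  intro h
                  rw [h] at hj
                  rw [Finset.mem_filter] at hj
                  rw [hj.2] at hfi
                  exact Bool.noConfusion hfi
                have := hAint i j (Ne.symm hji)
                omega
        calc (P.card : ℝ) ≤ ((univ.filter fun j => f j = true).card : ℝ) * (m : ℝ) := by
              exact_mod_cast hcnt
          _ ≤ S * (m : ℝ) := by
              apply mul_le_mul_of_nonneg_right ?_ (Nat.cast_nonneg m)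
              · exact hwt
      calc (∑ k ∈ A i, ∑ y ∈ D f, W (u k) y) / q
          ≤ ((P.card : ℝ) + (q : ℝ) * δ) / q := by
            refine (div_le_div_iff_of_pos_right hqR).mpr ?_
            rw [hsplit]; exact add_le_add hb1 hb2
        _ = (P.card : ℝ) / q + δ := by field_simp
        _ ≤ S * (m : ℝ) / q + δ :=
            add_le_add_left ((div_le_div_iff_of_pos_right hqR).mpr hPcard) δ
        _ ≤ lam2 / 2 + lam2 / 2 := add_le_add hover hδ2
        _ = lam2 := by ring

/-- Achievability, Case 2: for Hamming weight bound `c·m^β`, the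
computation rate `C/(1+2β)` is achievable with scaling function `L(R,n) = 2^{Rn}`. -/
theorem achievability_case2 {𝒳 𝒴 : Type*}
    [Fintype 𝒳] [DecidableEq 𝒳] [Fintype 𝒴] [DecidableEq 𝒴]
    (W : ∀ n : ℕ, (Fin n → 𝒳) → (Fin n → 𝒴) → ℝ) (hW : ∀ n, IsChannel (W n))
    (C : ℝ) (hC : 0 < C) (hrate : SupportsRate W C)
    (c β : ℝ) (hc : 0 < c) (hβ : 0 < β)
    (lam1 : ℝ) (hl1 : 0 < lam1) (hl1' : lam1 < 1)
    (lam2 : ℝ) (hl2 : 0 < lam2) (hl2' : lam2 < 1)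
    (γ : ℝ) (hγ0 : 0 < γ) (hγC : γ < C / (1 + 2 * β)) :
    ∃ n₀ : ℕ, ∀ n ≥ n₀, ∃ m : ℕ, 0 < m ∧
      (2:ℝ) ^ ((C / (1 + 2 * β) - γ) * (n : ℝ)) < (m : ℝ) ∧
      ∃ (Q : (Fin m → Bool) → (Fin n → 𝒳) → ℝ)
        (D : ((Fin m → Bool) → Bool) → Finset (Fin n → 𝒴)),
        IsBFCCode (W n) (FleR m (c * (m : ℝ) ^ β)) Q D lam1 lam2 := by
  classical
  have hβ1 : (0:ℝ) < 1 + 2 * β := by linarith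
  set R : ℝ := C / (1 + 2 * β) with hRdef
  have hCR : C = (1 + 2*β) * R := by rw [hRdef]; field_simp
  have hRpos : 0 < R := div_pos hC hβ1
  have hRγ : 0 < R - γ := by linarith
  set δ : ℝ := min lam1 lam2 / 2 with hδdef
  have hmin1 : min lam1 lam2 ≤ lam1 := min_le_left _ _
  have hmin2 : min lam1 lam2 ≤ lam2 := min_le_right _ _
  have hminpos : 0 < min lam1 lam2 := lt_min hl1 hl2
  have hδpos : 0 < δ := half_pos hminpos
  have hδhalf : δ < 1/2 := by rw [hδdef]; linarith
  obtain ⟨n₁, hn₁⟩ := hrate γ hγ0 δ hδpos hδhalf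
  set K₁ : ℝ := 4 + 8 * (2:ℝ)^(β:ℝ) * c / lam2 with hK₁def
  have h2βpos : (0:ℝ) < (2:ℝ)^(β:ℝ) := Real.rpow_pos_of_pos two_pos _
  have hK₁pos : 0 < K₁ := by
    rw [hK₁def]; positivity
  set A₀ : ℝ := 18 * K₁^2 + 4 with hA₀def
  have hA₀pos : 0 < A₀ := by rw [hA₀def]; positivity
  set n₂ : ℕ := ⌈Real.logb 2 A₀ / (2*β*γ)⌉₊ with hn₂def
  refine ⟨max n₁ n₂, fun n hn => ?_⟩
  have hn1 : n₁ ≤ n := le_trans (le_max_left _ _) hn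
  have hn2 : n₂ ≤ n := le_trans (le_max_right _ _) hn
  set x : ℝ := (2:ℝ) ^ ((R - γ) * (n:ℝ)) with hxdef
  have hxpos : 0 < x := Real.rpow_pos_of_pos two_pos _
  have hx1 : 1 ≤ x := Real.one_le_rpow one_le_two (by positivity)
  set m : ℕ := ⌊x⌋₊ + 1 with hmdef
  have hm1 : 1 ≤ m := by omega
  have hxm : x < (m:ℝ) := by
    have h1 := Nat.lt_floor_add_one x
    rw [hmdef]
    push_cast
    exact h1
  have hm0 : (0:ℝ) < (m:ℝ) := hxpos.trans hxm
  have hmx : (m:ℝ) ≤ 2*x := by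
    have h1 : (⌊x⌋₊:ℝ) ≤ x := Nat.floor_le (le_of_lt hxpos)
    rw [hmdef]
    push_cast
    linarith
  set q : ℕ := m + ⌈4*c*(m:ℝ)^β*(m:ℝ)/lam2⌉₊ with hqdef
  have hmq : m ≤ q := Nat.le_add_right _ _
  have hq0 : 0 < q := lt_of_lt_of_le hm1 hmq
  have hqR : (0:ℝ) < q := by exact_mod_cast hq0
  have hmβpos : (0:ℝ) < (m:ℝ)^β := Real.rpow_pos_of_pos hm0 _
  have hcm : (0:ℝ) < 4*c*(m:ℝ)^β*(m:ℝ)/lam2 := by positivity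
  have hqcast : (q:ℝ) = (m:ℝ) + (⌈4*c*(m:ℝ)^β*(m:ℝ)/lam2⌉₊:ℝ) := by
    rw [hqdef, Nat.cast_add]
  have hqlb : 4*c*(m:ℝ)^β*(m:ℝ)/lam2 ≤ (q:ℝ) := by
    have h1 : 4*c*(m:ℝ)^β*(m:ℝ)/lam2 ≤ (⌈4*c*(m:ℝ)^β*(m:ℝ)/lam2⌉₊:ℝ) := Nat.le_ceil _
    linarith [hm0, hqcast]
  have hqub : (q:ℝ) ≤ 2*(m:ℝ) + 4*c*(m:ℝ)^β*(m:ℝ)/lam2 := by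
    have h1 : (⌈4*c*(m:ℝ)^β*(m:ℝ)/lam2⌉₊:ℝ) < 4*c*(m:ℝ)^β*(m:ℝ)/lam2 + 1 :=
      Nat.ceil_lt_add_one (le_of_lt hcm)
    have h2 : (1:ℝ) ≤ (m:ℝ) := by exact_mod_cast hm1
    linarith [hqcast]
  obtain ⟨u, E, hcode⟩ := hn₁ n hn1
  have hMlb : (2:ℝ) ^ ((n:ℝ) * (C - γ)) ≤ ((⌈(2:ℝ) ^ ((n:ℝ) * (C - γ))⌉₊ : ℕ):ℝ) :=
    Nat.le_ceil _
  -- bound on q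
  have hmub : (m:ℝ)^β ≤ (2:ℝ)^(β:ℝ) * x^β := by
    calc (m:ℝ)^β ≤ (2*x)^β := Real.rpow_le_rpow (le_of_lt hm0) hmx (le_of_lt hβ)
      _ = (2:ℝ)^(β:ℝ) * x^β := Real.mul_rpow (by norm_num) (le_of_lt hxpos)
  have hxx : x^(β:ℝ) * x = x^((1:ℝ)+β) := by
    rw [Real.rpow_add hxpos, Real.rpow_one]
    ring
  have hx1β : x ≤ x^((1:ℝ)+β) := by
    nth_rewrite 1 [← Real.rpow_one x]
    exact Real.rpow_le_rpow_of_exponent_le hx1 (by linarith)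
  have hx1βpos : 0 < x^((1:ℝ)+β) := Real.rpow_pos_of_pos hxpos _
  have hqK : (q:ℝ) ≤ K₁ * x^((1:ℝ)+β) := by
    have hmm : (m:ℝ)^β*(m:ℝ) ≤ ((2:ℝ)^(β:ℝ)*x^β)*(2*x) :=
      mul_le_mul hmub hmx (le_of_lt hm0) (by positivity)
    have h3a : 4*c*(m:ℝ)^β*(m:ℝ) ≤ (8*(2:ℝ)^(β:ℝ)*c)*x^((1:ℝ)+β) := by
      calc 4*c*(m:ℝ)^β*(m:ℝ) = (4*c)*((m:ℝ)^β*(m:ℝ)) := by ring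
        _ ≤ (4*c)*(((2:ℝ)^(β:ℝ)*x^β)*(2*x)) :=
            mul_le_mul_of_nonneg_left hmm (by positivity)
        _ = (8*(2:ℝ)^(β:ℝ)*c)*(x^(β:ℝ)*x) := by ring
        _ = (8*(2:ℝ)^(β:ℝ)*c)*x^((1:ℝ)+β) := by rw [hxx]
    have h3 : 4*c*(m:ℝ)^β*(m:ℝ)/lam2 ≤ (8*(2:ℝ)^(β:ℝ)*c/lam2)*x^((1:ℝ)+β) := by
      have hrw : (8*(2:ℝ)^(β:ℝ)*c/lam2)*x^((1:ℝ)+β)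
          = ((8*(2:ℝ)^(β:ℝ)*c)*x^((1:ℝ)+β))/lam2 := by ring
      rw [hrw]
      exact (div_le_div_iff_of_pos_right hl2).mpr h3a
    calc (q:ℝ) ≤ 2*(m:ℝ) + 4*c*(m:ℝ)^β*(m:ℝ)/lam2 := hqub
      _ ≤ 2*(2*x) + (8*(2:ℝ)^(β:ℝ)*c/lam2)*x^((1:ℝ)+β) := by linarith
      _ ≤ 4*x^((1:ℝ)+β) + (8*(2:ℝ)^(β:ℝ)*c/lam2)*x^((1:ℝ)+β) := by linarith
      _ = K₁ * x^((1:ℝ)+β) := by rw [hK₁def]; ring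
  -- key numeric inequality
  have hexp2 : (x^((1:ℝ)+β))^2 = x^((2:ℝ)+2*β) := by
    rw [← Real.rpow_natCast (x^((1:ℝ)+β)) 2, ← Real.rpow_mul (le_of_lt hxpos)]
    congr 1
    push_cast
    ring
  have hx2 : x^(2:ℕ) ≤ x^((2:ℝ)+2*β) := by
    rw [← Real.rpow_natCast x 2]
    apply Real.rpow_le_rpow_of_exponent_le hx1
    push_cast
    linarith
  have hA₀le : A₀ ≤ (2:ℝ)^(2*β*γ*(n:ℝ)) := by
    have hbg : (0:ℝ) < 2*β*γ := by positivity
    have h1 : Real.logb 2 A₀ / (2*β*γ) ≤ (n₂:ℝ) := Nat.le_ceil _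
    have h2 : (n₂:ℝ) ≤ (n:ℝ) := by exact_mod_cast hn2
    have h3 : Real.logb 2 A₀ ≤ 2*β*γ*(n:ℝ) := by
      rw [div_le_iff₀ hbg] at h1
      have h4 : (n₂:ℝ)*(2*β*γ) ≤ (n:ℝ)*(2*β*γ) :=
        mul_le_mul_of_nonneg_right h2 (le_of_lt hbg)
      linarith [h1, h4]
    calc A₀ = (2:ℝ)^(Real.logb 2 A₀) := (Real.rpow_logb two_pos (by norm_num) hA₀pos).symm
      _ ≤ (2:ℝ)^(2*β*γ*(n:ℝ)) := Real.rpow_le_rpow_of_exponent_le one_le_two h3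
  have hxid : x^((2:ℝ)+2*β) * (2:ℝ)^(2*β*γ*(n:ℝ)) = x * (2:ℝ)^((n:ℝ)*(C-γ)) := by
    have hexpid : ((R-γ)*(n:ℝ))*((2:ℝ)+2*β) + 2*β*γ*(n:ℝ)
        = (R-γ)*(n:ℝ) + (n:ℝ)*(C-γ) := by rw [hCR]; ring
    have e1 : x^((2:ℝ)+2*β) = (2:ℝ)^(((R-γ)*(n:ℝ))*((2:ℝ)+2*β)) := by
      rw [hxdef]
      exact (Real.rpow_mul (by norm_num) _ _).symm
    calc x^((2:ℝ)+2*β) * (2:ℝ)^(2*β*γ*(n:ℝ))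
        = (2:ℝ)^(((R-γ)*(n:ℝ))*((2:ℝ)+2*β)) * (2:ℝ)^(2*β*γ*(n:ℝ)) := by rw [e1]
      _ = (2:ℝ)^(((R-γ)*(n:ℝ))*((2:ℝ)+2*β) + 2*β*γ*(n:ℝ)) :=
          (Real.rpow_add two_pos _ _).symm
      _ = (2:ℝ)^((R-γ)*(n:ℝ) + (n:ℝ)*(C-γ)) := by rw [hexpid]
      _ = (2:ℝ)^((R-γ)*(n:ℝ)) * (2:ℝ)^((n:ℝ)*(C-γ)) := Real.rpow_add two_pos _ _
      _ = x * (2:ℝ)^((n:ℝ)*(C-γ)) := by rw [← hxdef]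
  have hKeyR : 18*(q:ℝ)^2 + (m:ℝ)*(m:ℝ)
      ≤ (m:ℝ)*((⌈(2:ℝ) ^ ((n:ℝ) * (C - γ))⌉₊ : ℕ):ℝ) := by
    have hq2 : (q:ℝ)^2 ≤ K₁^2 * x^((2:ℝ)+2*β) := by
      calc (q:ℝ)^2 ≤ (K₁ * x^((1:ℝ)+β))^2 := by
            apply pow_le_pow_left₀ (le_of_lt hqR) hqK
        _ = K₁^2 * (x^((1:ℝ)+β))^2 := by ring
        _ = K₁^2 * x^((2:ℝ)+2*β) := by rw [hexp2]
    have hm2 : (m:ℝ)*(m:ℝ) ≤ 4 * x^((2:ℝ)+2*β) := by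
      calc (m:ℝ)*(m:ℝ) ≤ (2*x)*(2*x) :=
            mul_le_mul hmx hmx (le_of_lt hm0) (by positivity)
        _ = 4 * x^(2:ℕ) := by ring
        _ ≤ 4 * x^((2:ℝ)+2*β) := by linarith [hx2]
    have hxA : (0:ℝ) < x^((2:ℝ)+2*β) := Real.rpow_pos_of_pos hxpos _
    calc 18*(q:ℝ)^2 + (m:ℝ)*(m:ℝ) ≤ 18*(K₁^2 * x^((2:ℝ)+2*β)) + 4 * x^((2:ℝ)+2*β) := by
          linarith
      _ = A₀ * x^((2:ℝ)+2*β) := by rw [hA₀def]; ring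
      _ ≤ (2:ℝ)^(2*β*γ*(n:ℝ)) * x^((2:ℝ)+2*β) := by
          apply mul_le_mul_of_nonneg_right hA₀le (le_of_lt hxA)
      _ = x * (2:ℝ)^((n:ℝ)*(C-γ)) := by rw [← hxid]; ring
      _ ≤ (m:ℝ)*((⌈(2:ℝ) ^ ((n:ℝ) * (C - γ))⌉₊ : ℕ):ℝ) := by
          apply mul_le_mul (le_of_lt hxm) hMlb (by positivity) (by positivity)
  have hKey : 18*q^2 + m*m ≤ m*(⌈(2:ℝ) ^ ((n:ℝ) * (C - γ))⌉₊ : ℕ) := by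
    have hcast : ((18*q^2 + m*m : ℕ):ℝ)
        ≤ ((m*(⌈(2:ℝ) ^ ((n:ℝ) * (C - γ))⌉₊ : ℕ) : ℕ):ℝ) := by
      rw [Nat.cast_add, Nat.cast_mul, Nat.cast_mul, Nat.cast_mul, Nat.cast_pow, Nat.cast_ofNat]
      exact hKeyR
    exact Nat.cast_le.mp hcast
  obtain ⟨A, hAcard, hAint⟩ :=
    bfc_exists_family (⌈(2:ℝ) ^ ((n:ℝ) * (C - γ))⌉₊) q m hm1 hmq hKey
  have hover : (c*(m:ℝ)^β) * (m:ℝ) / (q:ℝ) ≤ lam2 / 2 := by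
    rw [div_le_iff₀ hqR]
    have h1 : 4*c*(m:ℝ)^β*(m:ℝ) ≤ lam2 * (q:ℝ) := by
      rw [div_le_iff₀ hl2] at hqlb
      linarith
    linarith [h1, mul_nonneg (le_of_lt hl2) (le_of_lt hqR)]
  refine ⟨m, hm1, hxm, ?_⟩
  exact bfc_construct_s4 (W n) (hW n) u E δ (le_of_lt hδpos) hcode A q hq0 hAcard hAint
    (c*(m:ℝ)^β) lam1 lam2 (by positivity)
    (by rw [hδdef]; linarith) (by rw [hδdef]; linarith) hover
end

section
/- Fix finite alphabets 𝒳, 𝒴 and a family of channels (W_n)_{n ∈ ℕ} that supports rate C > 0. Let c > 0 be a fixed real constant. Then for all λ1, λ2 ∈ (0,1) and all γ ∈ (0, √(C/2)), for every sufficiently large n there exist a positive integer m with m > 2^{(√(C/2)−γ)·√n} and an (n, m, ℱ_m^W(≤ c·m^{log₂ m}), λ1, λ2) BFC code for W_n. (Achievability, Case 3: the computation rate √(C/2) is achievable for the class ℱ_m^W(≤ c·m^{log m}) with scaling function L(R,n) = 2^{R√n}.) -/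
open Finset

set_option maxHeartbeats 1600000 in
/-- Achievability, Case 3: for Hamming weight bound `c·m^{log₂ m}`, the
computation rate `√(C/2)` is achievable with scaling function `L(R,n) = 2^{R√n}`. -/
theorem achievability_case3 {𝒳 𝒴 : Type*}
    [Fintype 𝒳] [DecidableEq 𝒳] [Fintype 𝒴] [DecidableEq 𝒴]
    (W : ∀ n : ℕ, (Fin n → 𝒳) → (Fin n → 𝒴) → ℝ) (hW : ∀ n, IsChannel (W n))
    (C : ℝ) (hC : 0 < C) (hrate : SupportsRate W C)
    (c : ℝ) (hc : 0 < c)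
    (lam1 : ℝ) (hl1 : 0 < lam1) (hl1' : lam1 < 1)
    (lam2 : ℝ) (hl2 : 0 < lam2) (hl2' : lam2 < 1)
    (γ : ℝ) (hγ0 : 0 < γ) (hγC : γ < Real.sqrt (C / 2)) :
    ∃ n₀ : ℕ, ∀ n ≥ n₀, ∃ m : ℕ, 0 < m ∧
      (2:ℝ) ^ ((Real.sqrt (C / 2) - γ) * Real.sqrt (n : ℝ)) < (m : ℝ) ∧
      ∃ (Q : (Fin m → Bool) → (Fin n → 𝒳) → ℝ)
        (D : ((Fin m → Bool) → Bool) → Finset (Fin n → 𝒴)),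
        IsBFCCode (W n) (FleR m (c * (m : ℝ) ^ (Real.logb 2 (m : ℝ)))) Q D lam1 lam2 := by
  classical
  set R := Real.sqrt (C / 2) - γ with hRdef
  clear_value R
  have hCge : (0:ℝ) ≤ C / 2 := by linarith
  have hR0 : 0 < R := by rw [hRdef]; linarith
  have hRlt : R < Real.sqrt (C / 2) := by rw [hRdef]; linarith
  have hsq : Real.sqrt (C / 2) ^ 2 = C / 2 := Real.sq_sqrt hCge
  have hR2 : R ^ 2 < C / 2 := by
    have h := mul_self_lt_mul_self hR0.le hRlt
    rw [pow_two]
    nlinarith [hsq, h]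
  set ξ : ℝ := C / 2 - R ^ 2 with hξdef
  clear_value ξ
  have hξ0 : 0 < ξ := by rw [hξdef]; linarith
  set ε : ℝ := ξ / 2 with hεdef
  clear_value ε
  have hε0 : 0 < ε := by rw [hεdef]; linarith
  have hCξ : (C - ξ) / 2 = R ^ 2 + ε := by rw [hεdef, hξdef]; ring
  have hCξ0 : 0 < C - ξ := by rw [hξdef]; nlinarith [sq_nonneg R]
  set δ : ℝ := min (min lam1 lam2) (1/2) / 2 with hδdef
  clear_value δ
  have hδ0 : 0 < δ := by
    have : 0 < min (min lam1 lam2) (1/2) := lt_min (lt_min hl1 hl2) (by norm_num)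
    rw [hδdef]; linarith
  have hδhalf : δ < 1/2 := by
    have : min (min lam1 lam2) (1/2) ≤ 1/2 := min_le_right _ _
    rw [hδdef]; linarith
  have hδlam1 : δ ≤ lam1 := by
    have h1 : min (min lam1 lam2) (1/2) ≤ lam1 := le_trans (min_le_left _ _) (min_le_left _ _)
    rw [hδdef]; linarith
  have hδlam2 : δ ≤ lam2 / 2 := by
    have h1 : min (min lam1 lam2) (1/2) ≤ lam2 := le_trans (min_le_left _ _) (min_le_right _ _)
    rw [hδdef]; linarith
  have hl2δ : 0 < lam2 - δ := by linarith
  obtain ⟨n₁, hn₁⟩ := hrate ξ hξ0 δ hδ0 hδhalf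
  set A : ℝ := Real.logb 2 (c / (lam2 - δ)) + 3 with hAdef
  clear_value A
  set s₀ : ℝ := max 1 ((3 * R + |A| + ε) / ε) with hs₀def
  clear_value s₀
  have hs₀1 : (1:ℝ) ≤ s₀ := by rw [hs₀def]; exact le_max_left _ _
  refine ⟨max n₁ (max ⌈s₀ ^ 2⌉₊ ⌈(2:ℝ) / (C - ξ)⌉₊), fun n hn => ?_⟩
  have hnn₁ : n₁ ≤ n := le_trans (le_max_left _ _) hn
  have hnn₂ : ⌈s₀ ^ 2⌉₊ ≤ n := le_trans (le_trans (le_max_left _ _) (le_max_right _ _)) hn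
  have hnn₃ : ⌈(2:ℝ) / (C - ξ)⌉₊ ≤ n := le_trans (le_trans (le_max_right _ _) (le_max_right _ _)) hn
  set s := Real.sqrt (n : ℝ) with hsdef
  clear_value s
  have hs0 : 0 ≤ s := by rw [hsdef]; exact Real.sqrt_nonneg _
  have hs₀s : s₀ ≤ s := by
    rw [hsdef, Real.le_sqrt (by linarith) (Nat.cast_nonneg n)]
    calc s₀ ^ 2 ≤ (⌈s₀ ^ 2⌉₊ : ℝ) := Nat.le_ceil _
      _ ≤ (n : ℝ) := by exact_mod_cast hnn₂
  have hs1 : (1:ℝ) ≤ s := le_trans hs₀1 hs₀s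
  have hs2 : s ^ 2 = (n : ℝ) := by rw [hsdef]; exact Real.sq_sqrt (Nat.cast_nonneg n)
  -- key analytic inequality
  have hkey : 3 * R * s + A ≤ ε * (n : ℝ) := by
    have h1 : 3 * R + |A| + ε ≤ s₀ * ε := by
      have h : (3 * R + |A| + ε) / ε ≤ s₀ := by rw [hs₀def]; exact le_max_right _ _
      calc 3 * R + |A| + ε = ((3 * R + |A| + ε) / ε) * ε := by field_simp
        _ ≤ s₀ * ε := mul_le_mul_of_nonneg_right h hε0.le
    have h2 : ε * (n : ℝ) = ε * s * s := by rw [← hs2]; ring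
    have h3 : s₀ * ε * s ≤ s * ε * s :=
      mul_le_mul_of_nonneg_right (mul_le_mul_of_nonneg_right hs₀s hε0.le) hs0
    have h4 : (3 * R + |A| + ε) * s ≤ s₀ * ε * s := mul_le_mul_of_nonneg_right h1 hs0
    have h5 : |A| + ε ≤ (|A| + ε) * s := le_mul_of_one_le_right (by positivity) hs1
    have h6 := le_abs_self A
    linarith [h2, h3, h4, h5, h6, hε0]
  -- the message length m
  set m := ⌊(2:ℝ) ^ (R * s)⌋₊ + 1 with hmdef
  clear_value m
  have hm0 : 0 < m := by rw [hmdef]; exact Nat.succ_pos _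
  have hmgt : (2:ℝ) ^ (R * s) < (m : ℝ) := by
    rw [hmdef]; push_cast; exact Nat.lt_floor_add_one _
  have hRs0 : 0 ≤ R * s := mul_nonneg hR0.le hs0
  have h2Rs1 : (1:ℝ) ≤ 2 ^ (R * s) := Real.one_le_rpow one_le_two hRs0
  have hmle : (m : ℝ) ≤ 2 ^ (R * s + 1) := by
    have h1 : (m : ℝ) ≤ 2 ^ (R * s) + 1 := by
      rw [hmdef]; push_cast
      linarith [Nat.floor_le (show (0:ℝ) ≤ 2 ^ (R * s) by positivity)]
    have h2 : (2:ℝ) ^ (R * s + 1) = 2 ^ (R * s) * 2 := by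
      rw [Real.rpow_add two_pos, Real.rpow_one]
    linarith
  -- the prime q
  set y : ℝ := (n : ℝ) * (C - ξ) / 2 - 1 with hydef
  clear_value y
  have hy0 : 0 ≤ y := by
    have h1 : (2:ℝ) / (C - ξ) ≤ (n : ℝ) := le_trans (Nat.le_ceil _) (by exact_mod_cast hnn₃)
    rw [div_le_iff₀ hCξ0] at h1
    rw [hydef]; linarith
  set b := ⌊(2:ℝ) ^ y⌋₊ with hbdef
  clear_value b
  have hb1 : 1 ≤ b := by
    rw [hbdef]
    exact Nat.le_floor (by exact_mod_cast Real.one_le_rpow one_le_two hy0)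
  obtain ⟨q, hqp, hbq, hq2b⟩ := Nat.exists_prime_lt_and_le_two_mul b (by omega)
  haveI : Fact q.Prime := ⟨hqp⟩
  haveI : NeZero q := ⟨hqp.pos.ne'⟩
  have hqR0 : (0:ℝ) < (q : ℝ) := by exact_mod_cast hqp.pos
  set M := ⌈(2:ℝ) ^ ((n : ℝ) * (C - ξ))⌉₊ with hMdef
  have hqlb : (2:ℝ) ^ y < (q : ℝ) := by
    calc (2:ℝ) ^ y < (b : ℝ) + 1 := by rw [hbdef]; exact Nat.lt_floor_add_one _
      _ ≤ (q : ℝ) := by exact_mod_cast hbq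
  have hqub : (q : ℝ) ≤ 2 ^ (y + 1) := by
    have h1 : (b : ℝ) ≤ 2 ^ y := by
      rw [hbdef]; exact Nat.floor_le (by positivity)
    have h2 : (2:ℝ) ^ (y + 1) = 2 ^ y * 2 := by rw [Real.rpow_add two_pos, Real.rpow_one]
    have h3 : (q : ℝ) ≤ 2 * (b : ℝ) := by exact_mod_cast hq2b
    linarith
  have hqM : q * q ≤ M := by
    have h1 : (q : ℝ) * (q : ℝ) ≤ 2 ^ (y + 1) * 2 ^ (y + 1) :=
      mul_le_mul hqub hqub hqR0.le (by positivity)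
    have h2 : (2:ℝ) ^ (y + 1) * 2 ^ (y + 1) = 2 ^ ((n : ℝ) * (C - ξ)) := by
      rw [← Real.rpow_add two_pos]; congr 1; simp only [hydef]; ring
    have h3 : (q * q : ℝ) ≤ (M : ℝ) := by
      push_cast
      calc (q : ℝ) * (q : ℝ) ≤ 2 ^ ((n : ℝ) * (C - ξ)) := by rw [← h2]; exact h1
        _ ≤ (M : ℝ) := Nat.le_ceil _
    exact_mod_cast h3
  -- transmission code
  obtain ⟨u, E, huinj, hdisj, herr⟩ := hn₁ n hnn₁
  -- embedding
  obtain ⟨e⟩ : Nonempty (ZMod q × ZMod q ↪ Fin M) := by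
    rw [Function.Embedding.nonempty_iff_card_le]
    simpa [ZMod.card] using hqM
  -- polynomials
  set ι : Bool → ZMod q := fun bo => if bo then 1 else 0 with hιdef
  have hιinj : Function.Injective ι := by
    intro b1 b2 h
    cases b1 <;> cases b2 <;> simp [hιdef] at h ⊢ <;> exact (one_ne_zero h.symm).elim
  set pol : (Fin m → Bool) → Polynomial (ZMod q) :=
    fun i => ∑ t : Fin m, Polynomial.C (ι (i t)) * Polynomial.X ^ (t : ℕ) with hpoldef
  have hcoeff : ∀ (i : Fin m → Bool) (t : Fin m), (pol i).coeff (t : ℕ) = ι (i t) := by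
    intro i t
    simp only [hpoldef, Polynomial.finset_sum_coeff, Polynomial.coeff_C_mul,
      Polynomial.coeff_X_pow, Fin.val_eq_val, mul_ite, mul_one, mul_zero]
    rw [Finset.sum_ite_eq]
    simp
  have hpolinj : Function.Injective pol := by
    intro i i' h
    funext t
    apply hιinj
    rw [← hcoeff i t, ← hcoeff i' t, h]
  have hdeg : ∀ i, (pol i).natDegree ≤ m - 1 := by
    intro i
    simp only [hpoldef]
    apply Polynomial.natDegree_sum_le_of_forall_le
    intro t _
    refine le_trans (Polynomial.natDegree_C_mul_X_pow_le _ _) ?_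
    have := t.isLt; omega
  have hroots : ∀ i i' : Fin m → Bool, i ≠ i' →
      ((Finset.univ : Finset (ZMod q)).filter
        (fun a => (pol i').eval a = (pol i).eval a)).card ≤ m := by
    intro i i' hne
    set g := pol i' - pol i with hgdef
    have hg0 : g ≠ 0 := sub_ne_zero.mpr (fun h => hne ((hpolinj h).symm))
    have hsub : ((Finset.univ : Finset (ZMod q)).filter
        (fun a => (pol i').eval a = (pol i).eval a)) ⊆ g.roots.toFinset := by
      intro a ha
      rw [Finset.mem_filter] at ha
      rw [Multiset.mem_toFinset, Polynomial.mem_roots hg0]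
      simp only [Polynomial.IsRoot, hgdef, Polynomial.eval_sub, sub_eq_zero]
      exact ha.2
    calc _ ≤ g.roots.toFinset.card := Finset.card_le_card hsub
      _ ≤ Multiset.card g.roots := Multiset.toFinset_card_le _
      _ ≤ g.natDegree := Polynomial.card_roots' g
      _ ≤ max (pol i').natDegree (pol i).natDegree := Polynomial.natDegree_sub_le _ _
      _ ≤ m - 1 := max_le (hdeg i') (hdeg i)
      _ ≤ m := Nat.sub_le _ _
  -- codewords and code
  set κ : (Fin m → Bool) → ZMod q → Fin M := fun i a => e (a, (pol i).eval a) with hκdef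
  have hκinj : ∀ i a i' a', κ i a = κ i' a' → a = a' ∧ (pol i).eval a = (pol i').eval a' := by
    intro i a i' a' h
    simp only [hκdef] at h
    have := e.injective h
    exact ⟨congrArg Prod.fst this, congrArg Prod.snd this⟩
  set cw : (Fin m → Bool) → ZMod q → (Fin n → 𝒳) := fun i a => u (κ i a) with hcwdef
  set Q : (Fin m → Bool) → (Fin n → 𝒳) → ℝ :=
    fun i x => ∑ a : ZMod q, if cw i a = x then (q : ℝ)⁻¹ else 0 with hQdef
  set D : ((Fin m → Bool) → Bool) → Finset (Fin n → 𝒴) :=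
    fun f => (Finset.univ.filter (fun i' => f i' = true)).biUnion
      (fun i' => Finset.univ.biUnion (fun a => E (κ i' a))) with hDdef
  have hcardZ : (Finset.univ : Finset (ZMod q)).card = q := by
    rw [Finset.card_univ, ZMod.card]
  -- channel facts
  have hW0 : ∀ x y, 0 ≤ W n x y := fun x y => (hW n x).1 y
  have hWmono : ∀ (x : Fin n → 𝒳) (A B : Finset (Fin n → 𝒴)), A ⊆ B →
      ∑ y ∈ A, W n x y ≤ ∑ y ∈ B, W n x y := fun x A B h =>
    Finset.sum_le_sum_of_subset_of_nonneg h (fun y _ _ => hW0 x y)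
  have hWD1 : ∀ (x : Fin n → 𝒳) (Ds : Finset (Fin n → 𝒴)), ∑ y ∈ Ds, W n x y ≤ 1 := by
    intro x Ds
    calc ∑ y ∈ Ds, W n x y ≤ ∑ y, W n x y := hWmono x Ds Finset.univ (Finset.subset_univ _)
      _ = 1 := (hW n x).2
  -- PMF
  have hQpmf : ∀ i, IsPMF (Q i) := by
    intro i
    constructor
    · intro x
      apply Finset.sum_nonneg
      intro a _
      split
      · positivity
      · exact le_rfl
    · rw [Finset.sum_comm]
      have h1 : ∀ a : ZMod q, (∑ x, if cw i a = x then (q : ℝ)⁻¹ else 0) = (q : ℝ)⁻¹ := by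
        intro a
        rw [Finset.sum_ite_eq]
        simp
      rw [Finset.sum_congr rfl (fun a _ => h1 a), Finset.sum_const, hcardZ, nsmul_eq_mul]
      field_simp
  -- outProb formula
  have houtProb : ∀ (i : Fin m → Bool) (Ds : Finset (Fin n → 𝒴)),
      outProb (W n) (Q i) Ds = (q : ℝ)⁻¹ * ∑ a : ZMod q, ∑ y ∈ Ds, W n (cw i a) y := by
    intro i Ds
    unfold outProb
    calc ∑ x, Q i x * ∑ y ∈ Ds, W n x y
        = ∑ x, ∑ a : ZMod q, (if cw i a = x then (q : ℝ)⁻¹ else 0) * ∑ y ∈ Ds, W n x y := by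
          refine Finset.sum_congr rfl fun x _ => ?_
          simp only [hQdef]
          rw [Finset.sum_mul]
      _ = ∑ a : ZMod q, ∑ x, (if cw i a = x then (q : ℝ)⁻¹ * ∑ y ∈ Ds, W n x y else 0) := by
          rw [Finset.sum_comm]
          exact Finset.sum_congr rfl fun a _ => Finset.sum_congr rfl fun x _ => by
            split <;> simp
      _ = ∑ a : ZMod q, (q : ℝ)⁻¹ * ∑ y ∈ Ds, W n (cw i a) y := by
          refine Finset.sum_congr rfl fun a _ => ?_
          rw [Finset.sum_ite_eq]
          simp
      _ = (q : ℝ)⁻¹ * ∑ a : ZMod q, ∑ y ∈ Ds, W n (cw i a) y := by rw [Finset.mul_sum]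
  -- main numeric inequality
  have hm1 : (1:ℝ) ≤ (m : ℝ) := by exact_mod_cast hm0
  have hmain : c * (m : ℝ) ^ Real.logb 2 (m : ℝ) * (m : ℝ) ≤ (lam2 - δ) * (q : ℝ) := by
    set L := Real.logb 2 (m : ℝ) with hLdef
    have hL0 : 0 ≤ L := Real.logb_nonneg one_lt_two hm1
    have hLle : L ≤ R * s + 1 := by
      calc L ≤ Real.logb 2 (2 ^ (R * s + 1)) :=
            Real.logb_le_logb_of_le one_lt_two (by linarith) hmle
        _ = R * s + 1 := Real.logb_rpow two_pos (by norm_num)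
    have hmpow : (m : ℝ) ^ L ≤ (2:ℝ) ^ ((R * s + 1) ^ 2) := by
      have h1 : (m : ℝ) = 2 ^ L := (Real.rpow_logb two_pos (by norm_num) (by linarith)).symm
      rw [h1, ← Real.rpow_mul (by norm_num : (0:ℝ) ≤ 2)]
      apply Real.rpow_le_rpow_of_exponent_le one_le_two
      calc L * L ≤ (R * s + 1) * (R * s + 1) :=
            mul_le_mul hLle hLle hL0 (le_trans hL0 hLle)
        _ = (R * s + 1) ^ 2 := (pow_two _).symm
    have hexp : Real.logb 2 (c / (lam2 - δ)) + ((R * s + 1) ^ 2 + (R * s + 1)) ≤ y := by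
      have h2 : (n : ℝ) * (C - ξ) / 2 = R ^ 2 * (n : ℝ) + ε * (n : ℝ) := by
        have : (n : ℝ) * (C - ξ) / 2 = (n : ℝ) * ((C - ξ) / 2) := by ring
        rw [this, hCξ]; ring
      have h3 : (R * s + 1) ^ 2 = R ^ 2 * (n : ℝ) + 2 * (R * s) + 1 := by
        rw [← hs2]; ring
      simp only [hydef, hAdef] at hkey ⊢
      linarith [hkey, h2, h3]
    have hcq : c ≤ (lam2 - δ) * 2 ^ (y - ((R * s + 1) ^ 2 + (R * s + 1))) := by
      have h1 : c / (lam2 - δ) = 2 ^ Real.logb 2 (c / (lam2 - δ)) :=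
        (Real.rpow_logb two_pos (by norm_num) (by positivity)).symm
      have h2 : (2:ℝ) ^ Real.logb 2 (c / (lam2 - δ)) ≤
          2 ^ (y - ((R * s + 1) ^ 2 + (R * s + 1))) :=
        Real.rpow_le_rpow_of_exponent_le one_le_two (by linarith)
      calc c = (lam2 - δ) * (c / (lam2 - δ)) := by field_simp
        _ ≤ (lam2 - δ) * 2 ^ (y - ((R * s + 1) ^ 2 + (R * s + 1))) := by
            rw [h1]; exact mul_le_mul_of_nonneg_left h2 hl2δ.le
    calc c * (m : ℝ) ^ L * (m : ℝ) ≤ c * (2:ℝ) ^ ((R * s + 1) ^ 2) * 2 ^ (R * s + 1) :=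
          mul_le_mul (mul_le_mul_of_nonneg_left hmpow hc.le) hmle
            (Nat.cast_nonneg m) (by positivity)
      _ = c * 2 ^ ((R * s + 1) ^ 2 + (R * s + 1)) := by
          rw [mul_assoc, ← Real.rpow_add two_pos]
      _ ≤ (lam2 - δ) * 2 ^ (y - ((R * s + 1) ^ 2 + (R * s + 1))) *
            2 ^ ((R * s + 1) ^ 2 + (R * s + 1)) := by
          apply mul_le_mul_of_nonneg_right hcq (by positivity)
      _ = (lam2 - δ) * 2 ^ y := by
          rw [mul_assoc, ← Real.rpow_add two_pos]
          have hyy : y - ((R * s + 1) ^ 2 + (R * s + 1)) + ((R * s + 1) ^ 2 + (R * s + 1)) = y := by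
            ring
          rw [hyy]
      _ ≤ (lam2 - δ) * (q : ℝ) := mul_le_mul_of_nonneg_left hqlb.le hl2δ.le
  -- assemble
  refine ⟨m, hm0, hmgt, Q, D, hQpmf, ?_⟩
  intro i f hf
  have hfS : (((Finset.univ : Finset (Fin m → Bool)).filter
      (fun i' => f i' = true)).card : ℝ) ≤ c * (m : ℝ) ^ Real.logb 2 (m : ℝ) := hf
  constructor
  · -- false negative
    intro hfi
    rw [houtProb]
    have hbound : ∀ a : ZMod q, ∑ y ∈ (D f)ᶜ, W n (cw i a) y ≤ δ := by
      intro a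
      have hEsub : E (κ i a) ⊆ D f := by
        intro y hy
        simp only [hDdef, Finset.mem_biUnion, Finset.mem_filter, Finset.mem_univ, true_and]
        exact ⟨i, hfi, a, hy⟩
      have hsub : (D f)ᶜ ⊆ (E (κ i a))ᶜ := Finset.compl_subset_compl.mpr hEsub
      calc ∑ y ∈ (D f)ᶜ, W n (cw i a) y ≤ ∑ y ∈ (E (κ i a))ᶜ, W n (cw i a) y :=
            hWmono _ _ _ hsub
        _ ≤ δ := by simp only [hcwdef]; exact herr (κ i a)
    calc (q : ℝ)⁻¹ * ∑ a : ZMod q, ∑ y ∈ (D f)ᶜ, W n (cw i a) y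
        ≤ (q : ℝ)⁻¹ * ∑ _a : ZMod q, δ := by
          apply mul_le_mul_of_nonneg_left (Finset.sum_le_sum fun a _ => hbound a)
          positivity
      _ = δ := by
          rw [Finset.sum_const, hcardZ, nsmul_eq_mul]
          field_simp
      _ ≤ lam1 := hδlam1
  · -- false positive
    intro hfi
    rw [houtProb]
    have hbound : ∀ a : ZMod q, ∑ y ∈ D f, W n (cw i a) y ≤
        δ + (if ∃ i', f i' = true ∧ (pol i').eval a = (pol i).eval a then (1:ℝ) else 0) := by
      intro a
      by_cases hbad : ∃ i', f i' = true ∧ (pol i').eval a = (pol i).eval a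
      · rw [if_pos hbad]
        linarith [hWD1 (cw i a) (D f)]
      · rw [if_neg hbad, add_zero]
        have hsub : D f ⊆ (E (κ i a))ᶜ := by
          intro z hz
          rw [Finset.mem_compl]
          intro hzE
          simp only [hDdef, Finset.mem_biUnion, Finset.mem_filter, Finset.mem_univ,
            true_and] at hz
          obtain ⟨i', hi', a', hz'⟩ := hz
          by_cases hκeq : κ i' a' = κ i a
          · obtain ⟨ha, hev⟩ := hκinj _ _ _ _ hκeq
            exact hbad ⟨i', hi', ha ▸ hev⟩
          · exact (Finset.disjoint_left.mp (hdisj _ _ hκeq) hz') hzE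
        calc ∑ y ∈ D f, W n (cw i a) y ≤ ∑ y ∈ (E (κ i a))ᶜ, W n (cw i a) y :=
              hWmono _ _ _ hsub
          _ ≤ δ := by simp only [hcwdef]; exact herr (κ i a)
        -- need δ ≤ δ + 0: handled by simp? we end with ≤ δ, goal is ≤ δ + 0
    have hbc : ((Finset.univ : Finset (ZMod q)).filter
        (fun a => ∃ i', f i' = true ∧ (pol i').eval a = (pol i).eval a)).card ≤
        ((Finset.univ : Finset (Fin m → Bool)).filter (fun i' => f i' = true)).card * m := by
      have hsub : ((Finset.univ : Finset (ZMod q)).filter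
          (fun a => ∃ i', f i' = true ∧ (pol i').eval a = (pol i).eval a)) ⊆
          ((Finset.univ : Finset (Fin m → Bool)).filter (fun i' => f i' = true)).biUnion
            (fun i' => (Finset.univ : Finset (ZMod q)).filter
              (fun a => (pol i').eval a = (pol i).eval a)) := by
        intro a ha
        rw [Finset.mem_filter] at ha
        obtain ⟨-, i', h1, h2⟩ := ha
        rw [Finset.mem_biUnion]
        exact ⟨i', Finset.mem_filter.mpr ⟨Finset.mem_univ _, h1⟩,
          Finset.mem_filter.mpr ⟨Finset.mem_univ _, h2⟩⟩
      calc _ ≤ _ := Finset.card_le_card hsub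
        _ ≤ ∑ i' ∈ (Finset.univ : Finset (Fin m → Bool)).filter (fun i' => f i' = true),
            ((Finset.univ : Finset (ZMod q)).filter
              (fun a => (pol i').eval a = (pol i).eval a)).card := Finset.card_biUnion_le
        _ ≤ ∑ _i' ∈ (Finset.univ : Finset (Fin m → Bool)).filter (fun i' => f i' = true),
            m := by
            apply Finset.sum_le_sum
            intro i' hi'
            rw [Finset.mem_filter] at hi'
            have hne : i ≠ i' := by
              intro h
              rw [← h] at hi'
              rw [hfi] at hi'
              exact Bool.false_ne_true hi'.2
            exact hroots i i' hne
        _ = _ := by rw [Finset.sum_const, smul_eq_mul]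
    calc (q : ℝ)⁻¹ * ∑ a : ZMod q, ∑ y ∈ D f, W n (cw i a) y
        ≤ (q : ℝ)⁻¹ * ∑ a : ZMod q, (δ +
            (if ∃ i', f i' = true ∧ (pol i').eval a = (pol i).eval a then (1:ℝ) else 0)) := by
          apply mul_le_mul_of_nonneg_left (Finset.sum_le_sum fun a _ => hbound a)
          positivity
      _ = δ + (q : ℝ)⁻¹ * (((Finset.univ : Finset (ZMod q)).filter
            (fun a => ∃ i', f i' = true ∧ (pol i').eval a = (pol i).eval a)).card : ℝ) := by
          rw [Finset.sum_add_distrib, Finset.sum_const, hcardZ, nsmul_eq_mul,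
            Finset.sum_boole, mul_add]
          congr 1
          field_simp
      _ ≤ δ + (q : ℝ)⁻¹ * ((lam2 - δ) * (q : ℝ)) := by
          have h1 : (((Finset.univ : Finset (ZMod q)).filter
              (fun a => ∃ i', f i' = true ∧ (pol i').eval a = (pol i).eval a)).card : ℝ) ≤
              (lam2 - δ) * (q : ℝ) := by
            calc _ ≤ ((((Finset.univ : Finset (Fin m → Bool)).filter
                  (fun i' => f i' = true)).card * m : ℕ) : ℝ) := by exact_mod_cast hbc
              _ = (((Finset.univ : Finset (Fin m → Bool)).filter
                  (fun i' => f i' = true)).card : ℝ) * (m : ℝ) := by push_cast; ring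
              _ ≤ (c * (m : ℝ) ^ Real.logb 2 (m : ℝ)) * (m : ℝ) :=
                  mul_le_mul_of_nonneg_right hfS (Nat.cast_nonneg m)
              _ ≤ (lam2 - δ) * (q : ℝ) := hmain
          apply add_le_add le_rfl
          apply mul_le_mul_of_nonneg_left h1
          positivity
      _ = lam2 := by field_simp; ring
end

section
/- Fix finite alphabets 𝒳, 𝒴 and a family of channels (W_n)_{n ∈ ℕ} that supports rate C > 0. Let c > 0 be a fixed real constant. Then for all λ1, λ2 ∈ (0,1) and all γ ∈ (0, C/2), for every sufficiently large n there exist a positive integer m with m > (C/2 − γ)·n·log₂ n and an (n, m, ℱ_m^W(≤ c·2^{m/log₂ m}), λ1, λ2) BFC code for W_n. (Achievability, Case 5: the computation rate C/2 is achievable for the class ℱ_m^W(≤ c·2^{m/log m}) with scaling function L(R,n) = R·n·log n.) -/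
open Finset

/-- The 0/1-coefficient polynomial attached to a Boolean string. -/
noncomputable def polB (p : ℕ) {m : ℕ} (i : Fin m → Bool) : Polynomial (ZMod p) :=
  ∑ l : Fin m, Polynomial.monomial (l : ℕ) (if i l then (1 : ZMod p) else 0)

lemma polB_coeff (p : ℕ) {m : ℕ} (i : Fin m → Bool) (l₀ : Fin m) :
    (polB p i).coeff (l₀ : ℕ) = (if i l₀ then (1 : ZMod p) else 0) := by
  rw [polB, Polynomial.finset_sum_coeff]
  rw [Finset.sum_eq_single l₀]
  · simp [Polynomial.coeff_monomial]
  · intro l _ hl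
    rw [Polynomial.coeff_monomial, if_neg (fun h => hl (Fin.val_injective h))]
  · simp

lemma polB_card_le {p : ℕ} [Fact p.Prime] {m : ℕ} {i i' : Fin m → Bool} (h : i' ≠ i) :
    ((Finset.univ : Finset (ZMod p)).filter fun j =>
      (polB p i').eval j = (polB p i).eval j).card ≤ m := by
  classical
  set q : Polynomial (ZMod p) := polB p i' - polB p i with hq
  obtain ⟨l₀, hl₀⟩ := Function.ne_iff.mp h
  have hc : q.coeff (l₀ : ℕ) ≠ 0 := by
    rw [hq, Polynomial.coeff_sub, polB_coeff, polB_coeff]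
    cases hb : i' l₀ <;> cases hb' : i l₀ <;>
      simp_all
  have hq0 : q ≠ 0 := fun hz => hc (by rw [hz, Polynomial.coeff_zero])
  have hdeg : q.natDegree ≤ m := by
    refine le_trans (Polynomial.natDegree_sub_le _ _) (max_le ?_ ?_) <;>
    · refine Polynomial.natDegree_sum_le_of_forall_le _ _ fun l _ => ?_
      exact le_trans (Polynomial.natDegree_monomial_le _) (le_of_lt l.isLt)
  have hsub : ((Finset.univ : Finset (ZMod p)).filter fun j =>
      (polB p i').eval j = (polB p i).eval j) ⊆ q.roots.toFinset := by
    intro j hj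
    rw [Finset.mem_filter] at hj
    rw [Multiset.mem_toFinset, Polynomial.mem_roots hq0]
    simp [Polynomial.IsRoot, hq, sub_eq_zero, hj.2]
  calc _ ≤ q.roots.toFinset.card := Finset.card_le_card hsub
    _ ≤ Multiset.card q.roots := Multiset.toFinset_card_le _
    _ ≤ q.natDegree := Polynomial.card_roots' q
    _ ≤ m := hdeg

lemma eventually_sq_le_rpow (a T : ℝ) (ha : 0 < a) :
    ∀ᶠ x : ℝ in Filter.atTop, T * x ^ 2 ≤ (2 : ℝ) ^ (a * x) := by
  set b : ℝ := a * Real.log 2 with hbdef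
  have hb : 0 < b := mul_pos ha (Real.log_pos one_lt_two)
  have h1 : Filter.Tendsto (fun x : ℝ => Real.exp (b * x) / (b * x) ^ 2)
      Filter.atTop Filter.atTop :=
    (Real.tendsto_exp_div_pow_atTop 2).comp (Filter.Tendsto.const_mul_atTop hb Filter.tendsto_id)
  filter_upwards [h1.eventually_ge_atTop (T / b ^ 2), Filter.eventually_gt_atTop 0] with x hx hx0
  have hbx : (0 : ℝ) < (b * x) ^ 2 := by positivity
  have h2 : T / b ^ 2 * (b * x) ^ 2 ≤ Real.exp (b * x) := by
    have := mul_le_mul_of_nonneg_right hx hbx.le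
    rwa [div_mul_cancel₀ _ (ne_of_gt hbx)] at this
  have h3 : T * x ^ 2 = T / b ^ 2 * (b * x) ^ 2 := by
    field_simp
  rw [h3]
  refine h2.trans_eq ?_
  rw [Real.rpow_def_of_pos two_pos]
  congr 1
  rw [hbdef]; ring

lemma bfc_of_code {𝒳 𝒴 : Type*} [Fintype 𝒳] [Fintype 𝒴] [DecidableEq 𝒴]
    {n M m p : ℕ} [Fact p.Prime]
    {W : (Fin n → 𝒳) → (Fin n → 𝒴) → ℝ} (hW : IsChannel W)
    {u : Fin M → (Fin n → 𝒳)} {E : Fin M → Finset (Fin n → 𝒴)} {δ : ℝ}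
    (hcode : IsTransmissionCode W u E δ) (hδ0 : 0 ≤ δ)
    (hpM : p * p ≤ M) {S lam1 lam2 : ℝ} (hδ1 : δ ≤ lam1)
    (hS : S * m ≤ (lam2 - δ) * p) :
    ∃ (Q : (Fin m → Bool) → (Fin n → 𝒳) → ℝ)
      (D : ((Fin m → Bool) → Bool) → Finset (Fin n → 𝒴)),
      IsBFCCode W (FleR m S) Q D lam1 lam2 := by
  classical
  haveI : NeZero p := ⟨(Fact.out : p.Prime).ne_zero⟩
  have hp0 : (0:ℝ) < p := by exact_mod_cast (Fact.out : p.Prime).pos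
  obtain ⟨huinj, hdisj, herr⟩ := hcode
  obtain ⟨ψ⟩ : Nonempty ((ZMod p × ZMod p) ↪ Fin M) := by
    rw [Function.Embedding.nonempty_iff_card_le]
    simpa [ZMod.card] using hpM
  set enc : (Fin m → Bool) → ZMod p → Fin M :=
    fun i j => ψ ⟨j, (polB p i).eval j⟩ with henc
  set Q : (Fin m → Bool) → (Fin n → 𝒳) → ℝ :=
    fun i x => ∑ j : ZMod p, if u (enc i j) = x then (p:ℝ)⁻¹ else 0 with hQ
  set D : ((Fin m → Bool) → Bool) → Finset (Fin n → 𝒴) :=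
    fun f => (Finset.univ.filter fun i => f i = true).biUnion
      (fun i => Finset.univ.biUnion fun j : ZMod p => E (enc i j)) with hD
  have hWnn : ∀ x y, 0 ≤ W x y := fun x => (hW x).1
  have hsub : ∀ (x : Fin n → 𝒳) (T T' : Finset (Fin n → 𝒴)), T ⊆ T' →
      ∑ y ∈ T, W x y ≤ ∑ y ∈ T', W x y :=
    fun x T T' h => Finset.sum_le_sum_of_subset_of_nonneg h (fun y _ _ => hWnn x y)
  have hle1 : ∀ (x : Fin n → 𝒳) (T : Finset (Fin n → 𝒴)), ∑ y ∈ T, W x y ≤ 1 :=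
    fun x T => le_trans (hsub x T univ (Finset.subset_univ T)) (le_of_eq (hW x).2)
  have hout : ∀ (i : Fin m → Bool) (T : Finset (Fin n → 𝒴)),
      outProb W (Q i) T = ∑ j : ZMod p, (p:ℝ)⁻¹ * ∑ y ∈ T, W (u (enc i j)) y := by
    intro i T
    rw [outProb]
    have : ∀ x : Fin n → 𝒳, Q i x * ∑ y ∈ T, W x y =
        ∑ j : ZMod p, (if u (enc i j) = x then (p:ℝ)⁻¹ * ∑ y ∈ T, W x y else 0) := by
      intro x
      rw [hQ, Finset.sum_mul]
      exact Finset.sum_congr rfl fun j _ => by rw [ite_mul, zero_mul]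
    rw [Finset.sum_congr rfl fun x _ => this x, Finset.sum_comm]
    refine Finset.sum_congr rfl fun j _ => ?_
    rw [Finset.sum_ite_eq]
    simp
  have hEsubD : ∀ (f : (Fin m → Bool) → Bool) (i : Fin m → Bool) (j : ZMod p),
      f i = true → E (enc i j) ⊆ D f := by
    intro f i j hfi y hy
    rw [hD]
    refine Finset.mem_biUnion.mpr ⟨i, Finset.mem_filter.mpr ⟨Finset.mem_univ _, hfi⟩, ?_⟩
    exact Finset.mem_biUnion.mpr ⟨j, Finset.mem_univ _, hy⟩
  refine ⟨Q, D, ?_, ?_⟩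
  · -- PMF
    intro i
    constructor
    · intro x
      refine Finset.sum_nonneg fun j _ => ?_
      split <;> positivity
    · rw [Finset.sum_comm]
      have h1 : ∀ j : ZMod p, ∑ x, (if u (enc i j) = x then (p:ℝ)⁻¹ else 0) = (p:ℝ)⁻¹ := by
        intro j
        rw [Finset.sum_ite_eq]
        simp
      rw [Finset.sum_congr rfl fun j _ => h1 j, Finset.sum_const, Finset.card_univ, ZMod.card,
        nsmul_eq_mul, mul_inv_cancel₀ (ne_of_gt hp0)]
  · intro i f hf
    constructor
    · -- f i = true
      intro hfi
      rw [hout]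
      have hbound : ∀ j : ZMod p, ∑ y ∈ (D f)ᶜ, W (u (enc i j)) y ≤ δ := by
        intro j
        refine le_trans (hsub _ _ _ (Finset.compl_subset_compl.mpr (hEsubD f i j hfi)))
          (herr (enc i j))
      calc ∑ j : ZMod p, (p:ℝ)⁻¹ * ∑ y ∈ (D f)ᶜ, W (u (enc i j)) y
          ≤ ∑ _j : ZMod p, (p:ℝ)⁻¹ * δ :=
            Finset.sum_le_sum fun j _ => mul_le_mul_of_nonneg_left (hbound j) (by positivity)
        _ = δ := by
            rw [Finset.sum_const, Finset.card_univ, ZMod.card, nsmul_eq_mul]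
            field_simp
        _ ≤ lam1 := hδ1
    · -- f i = false
      intro hfi
      rw [hout]
      set Bad : Finset (ZMod p) := Finset.univ.filter
        (fun j => ∃ i', f i' = true ∧ (polB p i').eval j = (polB p i).eval j) with hBad
      have hgood : ∀ j ∉ Bad, ∑ y ∈ D f, W (u (enc i j)) y ≤ δ := by
        intro j hj
        refine le_trans (hsub _ _ _ ?_) (herr (enc i j))
        intro y hy
        rw [hD] at hy
        obtain ⟨i', hi', hy⟩ := Finset.mem_biUnion.mp hy
        obtain ⟨j', _, hy'⟩ := Finset.mem_biUnion.mp hy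
        have hfi' : f i' = true := (Finset.mem_filter.mp hi').2
        rw [Finset.mem_compl]
        intro hyE
        have hne : enc i' j' ≠ enc i j := by
          intro heq
          have hinj := ψ.injective heq
          rw [Prod.mk.injEq] at hinj
          obtain ⟨hj1, hj2⟩ := hinj
          subst hj1
          apply hj
          rw [hBad, Finset.mem_filter]
          refine ⟨Finset.mem_univ _, i', hfi', ?_⟩
          exact hj2
        exact (Finset.disjoint_left.mp (hdisj _ _ hne) hy') hyE
      have hterm : ∀ j : ZMod p, ∑ y ∈ D f, W (u (enc i j)) y ≤
          δ + (if j ∈ Bad then 1 else 0) := by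
        intro j
        by_cases hj : j ∈ Bad
        · rw [if_pos hj]
          exact le_trans (hle1 _ _) (by linarith)
        · rw [if_neg hj]
          simpa using hgood j hj
      have hBadcard : (Bad.card : ℝ) ≤ S * m := by
        have h1 : Bad ⊆ (Finset.univ.filter fun i' => f i' = true).biUnion
            (fun i' => Finset.univ.filter fun j => (polB p i').eval j = (polB p i).eval j) := by
          intro j hj
          rw [hBad, Finset.mem_filter] at hj
          obtain ⟨-, i', hfi', hev⟩ := hj
          exact Finset.mem_biUnion.mpr ⟨i', Finset.mem_filter.mpr ⟨Finset.mem_univ _, hfi'⟩,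
            Finset.mem_filter.mpr ⟨Finset.mem_univ _, hev⟩⟩
        have h2 : Bad.card ≤ hammingWeight f * m := by
          refine le_trans (Finset.card_le_card h1) (le_trans (Finset.card_biUnion_le) ?_)
          rw [hammingWeight]
          refine le_trans (Finset.sum_le_sum fun i' hi' => ?_)
            (le_of_eq (by rw [Finset.sum_const, smul_eq_mul]))
          have hne : i' ≠ i := by
            intro h
            have := (Finset.mem_filter.mp hi').2
            rw [h, hfi] at this
            exact Bool.false_ne_true this
          exact polB_card_le hne
        calc (Bad.card : ℝ) ≤ (hammingWeight f : ℝ) * m := by exact_mod_cast h2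
          _ ≤ S * m := mul_le_mul_of_nonneg_right hf (Nat.cast_nonneg m)
      have hsum : ∑ j : ZMod p, (p:ℝ)⁻¹ * ∑ y ∈ D f, W (u (enc i j)) y ≤
          (p:ℝ)⁻¹ * ((p:ℝ) * δ + Bad.card) := by
        rw [← Finset.mul_sum]
        refine mul_le_mul_of_nonneg_left ?_ (by positivity)
        calc ∑ j : ZMod p, ∑ y ∈ D f, W (u (enc i j)) y
            ≤ ∑ j : ZMod p, (δ + (if j ∈ Bad then 1 else 0)) :=
              Finset.sum_le_sum fun j _ => hterm j
          _ = (p:ℝ) * δ + Bad.card := by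
              rw [Finset.sum_add_distrib, Finset.sum_const, Finset.card_univ, ZMod.card,
                nsmul_eq_mul, Finset.sum_ite_mem, Finset.univ_inter, Finset.sum_const,
                nsmul_eq_mul, mul_one]
      refine le_trans hsum ?_
      have hBc : (Bad.card : ℝ) ≤ (lam2 - δ) * p := le_trans hBadcard hS
      rw [mul_add]
      rw [inv_mul_cancel_left₀ (ne_of_gt hp0)]
      have : (p:ℝ)⁻¹ * (Bad.card : ℝ) ≤ lam2 - δ := by
        rw [inv_mul_le_iff₀ hp0]
        linarith [hBc]
      linarith

set_option maxHeartbeats 1000000 in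
/-- Achievability, Case 5: for Hamming weight bound `c·2^{m/log₂ m}`, the
computation rate `C/2` is achievable with scaling function `L(R,n) = R·n·log₂ n`. -/
theorem achievability_case5 {𝒳 𝒴 : Type*}
    [Fintype 𝒳] [DecidableEq 𝒳] [Fintype 𝒴] [DecidableEq 𝒴]
    (W : ∀ n : ℕ, (Fin n → 𝒳) → (Fin n → 𝒴) → ℝ) (hW : ∀ n, IsChannel (W n))
    (C : ℝ) (hC : 0 < C) (hrate : SupportsRate W C)
    (c : ℝ) (hc : 0 < c)
    (lam1 : ℝ) (hl1 : 0 < lam1) (hl1' : lam1 < 1)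
    (lam2 : ℝ) (hl2 : 0 < lam2) (hl2' : lam2 < 1)
    (γ : ℝ) (hγ0 : 0 < γ) (hγC : γ < C / 2) :
    ∃ n₀ : ℕ, ∀ n ≥ n₀, ∃ m : ℕ, 0 < m ∧
      (C / 2 - γ) * (n : ℝ) * Real.logb 2 (n : ℝ) < (m : ℝ) ∧
      ∃ (Q : (Fin m → Bool) → (Fin n → 𝒳) → ℝ)
        (D : ((Fin m → Bool) → Bool) → Finset (Fin n → 𝒴)),
        IsBFCCode (W n) (FleR m (c * (2:ℝ) ^ ((m : ℝ) / Real.logb 2 (m : ℝ)))) Q D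
          lam1 lam2 := by
  classical
  set δ : ℝ := min lam1 lam2 / 2 with hδdef
  have hmin1 : min lam1 lam2 ≤ lam1 := min_le_left _ _
  have hmin2 : min lam1 lam2 ≤ lam2 := min_le_right _ _
  have hminpos : 0 < min lam1 lam2 := lt_min hl1 hl2
  have hδ0 : 0 < δ := by rw [hδdef]; linarith
  have hδhalf : δ < 1/2 := by rw [hδdef]; linarith
  have hδ1 : δ ≤ lam1 := by rw [hδdef]; linarith
  have hlam2δ : 0 < lam2 - δ := by rw [hδdef]; linarith
  have hcoef : 0 < C/2 - γ/2 := by linarith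
  have hCγ : 0 < C - γ/2 := by linarith
  obtain ⟨n₁, hn₁⟩ := hrate (γ/2) (by linarith) δ hδ0 hδhalf
  -- eventual conditions
  have hA : ∀ᶠ x : ℝ in Filter.atTop, 1 ≤ (C/2 - γ/2) * Real.logb 2 x :=
    ((Real.tendsto_logb_atTop (b := 2) one_lt_two).const_mul_atTop hcoef).eventually_ge_atTop 1
  have hB : ∀ᶠ x : ℝ in Filter.atTop, (2:ℝ) ≤ x := Filter.eventually_ge_atTop 2
  have ht3 : Filter.Tendsto (fun x : ℝ => x * (C - γ/2) / 2 - 1) Filter.atTop Filter.atTop := by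
    have h1 : Filter.Tendsto (fun x : ℝ => x * (C - γ/2) / 2 + (-1)) Filter.atTop Filter.atTop :=
      Filter.tendsto_atTop_add_const_right _ (-1)
        ((Filter.tendsto_id.atTop_mul_const hCγ).atTop_div_const two_pos)
    exact h1.congr fun x => by ring
  have hC3 : ∀ᶠ x : ℝ in Filter.atTop, (0:ℝ) ≤ x * (C - γ/2) / 2 - 1 :=
    ht3.eventually_ge_atTop 0
  have hD4 : ∀ᶠ x : ℝ in Filter.atTop,
      (4*c*C + 4*c)/(lam2 - δ) * x ^ 2 ≤ (2:ℝ) ^ (γ/4 * x) :=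
    eventually_sq_le_rpow (γ/4) _ (by linarith)
  obtain ⟨n₂, hn₂⟩ := Filter.eventually_atTop.mp
    ((tendsto_natCast_atTop_atTop (R := ℝ)).eventually (hA.and (hB.and (hC3.and hD4))))
  refine ⟨max n₁ n₂, fun n hn => ?_⟩
  obtain ⟨hA', hB', hC3', hD4'⟩ := hn₂ n (le_trans (le_max_right _ _) hn)
  set x : ℝ := (n : ℝ) with hxdef
  have hx0 : (0:ℝ) < x := by linarith
  have hlogx1 : (1:ℝ) ≤ Real.logb 2 x := by
    calc (1:ℝ) = Real.logb 2 2 := (Real.logb_self_eq_one one_lt_two).symm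
      _ ≤ Real.logb 2 x := Real.logb_le_logb_of_le one_lt_two two_pos hB'
  have hlogx0 : (0:ℝ) < Real.logb 2 x := by linarith
  have hxL0 : (0:ℝ) < x * Real.logb 2 x := mul_pos hx0 hlogx0
  -- define m
  set m : ℕ := ⌈(C/2 - γ/2) * x * Real.logb 2 x⌉₊ with hmdef
  have harg_pos : 0 < (C/2 - γ/2) * x * Real.logb 2 x := by
    rw [mul_assoc]; exact mul_pos hcoef hxL0
  have hm_lb : (C/2 - γ/2) * x * Real.logb 2 x ≤ (m:ℝ) := Nat.le_ceil _
  have hm_ub : (m:ℝ) < (C/2 - γ/2) * x * Real.logb 2 x + 1 :=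
    Nat.ceil_lt_add_one harg_pos.le
  have hgoal2 : (C/2 - γ) * x * Real.logb 2 x < (m:ℝ) := by
    have hd : (C/2 - γ/2) * x * Real.logb 2 x - (C/2 - γ) * x * Real.logb 2 x =
        γ * (x * Real.logb 2 x) / 2 := by ring
    linarith [mul_pos hγ0 hxL0, hm_lb]
  have hm0 : 0 < m := by
    have h1 : (0:ℝ) < (m:ℝ) := by
      have hpos : (0:ℝ) ≤ (C/2 - γ) * x * Real.logb 2 x := by
        rw [mul_assoc]
        exact mul_nonneg (by linarith) hxL0.le
      linarith
    exact_mod_cast h1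
  have hnm : x ≤ (m:ℝ) := by
    have h := mul_le_mul_of_nonneg_left hA' hx0.le
    rw [mul_one] at h
    have he : x * ((C/2 - γ/2) * Real.logb 2 x) = (C/2 - γ/2) * x * Real.logb 2 x := by ring
    linarith [hm_lb]
  have hm2 : (2:ℝ) ≤ (m:ℝ) := le_trans hB' hnm
  have hLm : Real.logb 2 x ≤ Real.logb 2 (m:ℝ) :=
    Real.logb_le_logb_of_le one_lt_two hx0 hnm
  have hlogm0 : (0:ℝ) < Real.logb 2 (m:ℝ) := by linarith
  -- bound on m / logb 2 m
  have hmdiv : (m:ℝ)/Real.logb 2 (m:ℝ) ≤ (C/2 - γ/2)*x + 1 := by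
    have h1 : (m:ℝ)/Real.logb 2 (m:ℝ) ≤ (m:ℝ)/Real.logb 2 x :=
      div_le_div_of_nonneg_left (Nat.cast_nonneg m) hlogx0 hLm
    have h2 : (m:ℝ)/Real.logb 2 x ≤ ((C/2 - γ/2) * x * Real.logb 2 x + 1)/Real.logb 2 x :=
      (div_le_div_iff_of_pos_right hlogx0).mpr hm_ub.le
    have h3 : ((C/2 - γ/2) * x * Real.logb 2 x + 1)/Real.logb 2 x ≤ (C/2 - γ/2)*x + 1 := by
      rw [div_le_iff₀ hlogx0]
      have hexp : ((C/2 - γ/2)*x + 1) * Real.logb 2 x =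
          (C/2 - γ/2) * x * Real.logb 2 x + Real.logb 2 x := by ring
      rw [hexp]
      linarith
    linarith
  -- bound on m itself
  have hL2x : Real.logb 2 x ≤ 2*x := by
    have hlogle : Real.log x ≤ x := by
      have := Real.log_le_sub_one_of_pos hx0
      linarith
    have hlog2 : (1/2:ℝ) ≤ Real.log 2 := by
      have := Real.log_two_gt_d9
      linarith
    calc Real.logb 2 x = Real.log x / Real.log 2 := rfl
      _ ≤ x / (1/2) := div_le_div₀ hx0.le hlogle (by norm_num) hlog2
      _ = 2*x := by ring
  have hmle : (m:ℝ) ≤ C*x^2 + 1 := by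
    have h1 : (C/2 - γ/2)*x*Real.logb 2 x ≤ (C/2)*x*Real.logb 2 x := by
      have hd : (C/2)*x*Real.logb 2 x - (C/2 - γ/2)*x*Real.logb 2 x =
          γ * (x * Real.logb 2 x) / 2 := by ring
      linarith [mul_pos hγ0 hxL0]
    have h2 : (C/2)*x*Real.logb 2 x ≤ (C/2)*x*(2*x) := by
      have hcx : (0:ℝ) ≤ C/2*x := by positivity
      have h21 := mul_le_mul_of_nonneg_left hL2x hcx
      have e1 : C/2*x*Real.logb 2 x = (C/2)*x*Real.logb 2 x := by ring
      have e2 : C/2*x*(2*x) = (C/2)*x*(2*x) := by ring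
      linarith
    have e3 : (C/2)*x*(2*x) = C*x^2 := by ring
    linarith [hm_ub]
  -- the prime
  set e : ℝ := x * (C - γ/2) / 2 - 1 with hedef
  have he0 : (0:ℝ) ≤ e := hC3'
  have hre1 : (1:ℝ) ≤ (2:ℝ) ^ e := by
    calc (1:ℝ) = (2:ℝ) ^ (0:ℝ) := (Real.rpow_zero 2).symm
      _ ≤ (2:ℝ) ^ e := Real.rpow_le_rpow_of_exponent_le one_le_two he0
  set N : ℕ := ⌊(2:ℝ) ^ e⌋₊ with hNdef
  have hN0 : N ≠ 0 := by
    have : 1 ≤ N := Nat.le_floor (by exact_mod_cast hre1)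
    omega
  obtain ⟨p, hp, hNp, hp2N⟩ := Nat.exists_prime_lt_and_le_two_mul N hN0
  haveI : Fact p.Prime := ⟨hp⟩
  have hplo : (2:ℝ) ^ e ≤ (p:ℝ) := by
    have h1 : (2:ℝ) ^ e < (N:ℝ) + 1 := Nat.lt_floor_add_one _
    have h2 : (N:ℝ) + 1 ≤ (p:ℝ) := by exact_mod_cast hNp
    linarith
  have hphi : (p:ℝ) ≤ 2 * (2:ℝ) ^ e := by
    have h1 : ((N:ℝ)) ≤ (2:ℝ) ^ e := Nat.floor_le (by positivity)
    have h2 : (p:ℝ) ≤ 2 * (N:ℝ) := by exact_mod_cast hp2N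
    linarith
  have hrpow2 : ((2:ℝ)) ^ ((2:ℝ)) = 4 := by
    rw [show ((2:ℝ)) = ((2:ℕ):ℝ) by norm_num, Real.rpow_natCast]
    norm_num
  have hpM : p * p ≤ ⌈(2:ℝ) ^ (x * (C - γ/2))⌉₊ := by
    have h1 : ((p:ℝ)) * (p:ℝ) ≤ (2 * (2:ℝ)^e) * (2 * (2:ℝ)^e) :=
      mul_le_mul hphi hphi (by positivity) (by positivity)
    have h2 : (2 * (2:ℝ)^e) * (2 * (2:ℝ)^e) = (2:ℝ) ^ (x * (C - γ/2)) := by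
      have : (2 * (2:ℝ)^e) * (2 * (2:ℝ)^e) = (2:ℝ)^(2:ℝ) * ((2:ℝ)^e * (2:ℝ)^e) := by
        rw [hrpow2]; ring
      rw [this, ← Real.rpow_add two_pos, ← Real.rpow_add two_pos]
      congr 1
      rw [hedef]; ring
    have h3 : ((p * p : ℕ) : ℝ) ≤ (⌈(2:ℝ) ^ (x * (C - γ/2))⌉₊ : ℝ) := by
      push_cast
      calc ((p:ℝ)) * (p:ℝ) ≤ (2:ℝ) ^ (x * (C - γ/2)) := by rw [← h2]; exact h1
        _ ≤ _ := Nat.le_ceil _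
    exact_mod_cast h3
  -- the smallness bound
  have hSfinal : (c * (2:ℝ) ^ ((m:ℝ) / Real.logb 2 (m:ℝ))) * (m:ℝ) ≤ (lam2 - δ) * p := by
    have h4 : (4*c*C + 4*c) * x^2 ≤ (lam2 - δ) * (2:ℝ) ^ (γ/4 * x) := by
      have h := hD4'
      rw [div_mul_eq_mul_div, div_le_iff₀ hlam2δ] at h
      calc (4*c*C + 4*c) * x^2 ≤ (2:ℝ) ^ (γ/4 * x) * (lam2 - δ) := h
        _ = (lam2 - δ) * (2:ℝ) ^ (γ/4 * x) := by ring
    have hx2sq : (1:ℝ) ≤ x^2 := by nlinarith [hB']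
    have h5 : 4*c*(C*x^2 + 1) ≤ (lam2 - δ) * (2:ℝ) ^ (γ/4 * x) := by
      have h51 : (0:ℝ) ≤ 4*c := by linarith
      have h52 := mul_le_mul_of_nonneg_left hx2sq h51
      have h53 : 4*c*(C*x^2+1) = 4*c*C*x^2 + 4*c*1 := by ring
      have h54 : (4*c*C + 4*c)*x^2 = 4*c*C*x^2 + 4*c*x^2 := by ring
      linarith
    have hBpos : (0:ℝ) < (2:ℝ) ^ ((C/2 - γ/2)*x - 1) := Real.rpow_pos_of_pos two_pos _
    have h6 := mul_le_mul_of_nonneg_right h5 hBpos.le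
    have hlhs : 4*c*(C*x^2 + 1) * (2:ℝ) ^ ((C/2 - γ/2)*x - 1) =
        c * (2:ℝ) ^ ((C/2 - γ/2)*x + 1) * (C*x^2 + 1) := by
      rw [show ((C/2 - γ/2)*x + 1) = (2:ℝ) + ((C/2 - γ/2)*x - 1) by ring,
        Real.rpow_add two_pos, hrpow2]
      ring
    have hrhs : (lam2 - δ) * (2:ℝ) ^ (γ/4 * x) * (2:ℝ) ^ ((C/2 - γ/2)*x - 1) =
        (lam2 - δ) * (2:ℝ) ^ e := by
      rw [mul_assoc, ← Real.rpow_add two_pos]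
      congr 2
      rw [hedef]; ring
    have h7 : c * (2:ℝ) ^ ((C/2 - γ/2)*x + 1) * (C*x^2 + 1) ≤ (lam2 - δ) * (2:ℝ) ^ e := by
      rw [← hlhs, ← hrhs]; exact h6
    have h8 : (c * (2:ℝ) ^ ((m:ℝ) / Real.logb 2 (m:ℝ))) * (m:ℝ) ≤
        c * (2:ℝ) ^ ((C/2 - γ/2)*x + 1) * (C*x^2 + 1) := by
      have hb1 : (2:ℝ) ^ ((m:ℝ) / Real.logb 2 (m:ℝ)) ≤ (2:ℝ) ^ ((C/2 - γ/2)*x + 1) :=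
        Real.rpow_le_rpow_of_exponent_le one_le_two hmdiv
      have hm0' : (0:ℝ) ≤ (m:ℝ) := Nat.cast_nonneg m
      have := mul_le_mul (mul_le_mul_of_nonneg_left hb1 hc.le) hmle hm0'
        (by positivity)
      linarith [this]
    have h9 : (lam2 - δ) * (2:ℝ) ^ e ≤ (lam2 - δ) * p :=
      mul_le_mul_of_nonneg_left hplo hlam2δ.le
    linarith
  -- get the transmission code and conclude
  obtain ⟨u, E, hcode⟩ := hn₁ n (le_trans (le_max_left _ _) hn)
  obtain ⟨Q, D, hQD⟩ := bfc_of_code (hW n) hcode hδ0.le hpM hδ1 hSfinal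
  exact ⟨m, hm0, hgoal2, Q, D, hQD⟩
end

section
/- Fix finite alphabets 𝒳, 𝒴 and a family of channels (W_n)_{n ∈ ℕ} that supports rate C > 0. Let c > 0 be a fixed real constant and γ' ∈ (0, 1]. Then for all λ1, λ2 ∈ (0,1) and all γ ∈ (0, C), for every sufficiently large n there exist a positive integer m with m > (C − γ)·n and an (n, m, ℱ_m^W(≤ c·2^{γ'·m}), λ1, λ2) BFC code for W_n. (Achievability, Case 6: the computation rate C is achievable for the class ℱ_m^W(≤ c·2^{γ'm}) with scaling function L(R,n) = R·n.) -/
open Finset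

lemma bfc_of_transmission {𝒳 𝒴 : Type*} [Fintype 𝒳] [Fintype 𝒴] [DecidableEq 𝒴]
    {n M m : ℕ} (W : (Fin n → 𝒳) → (Fin n → 𝒴) → ℝ) (hW : IsChannel W)
    (u : Fin M → (Fin n → 𝒳)) (E : Fin M → Finset (Fin n → 𝒴)) (δ : ℝ)
    (hcode : IsTransmissionCode W u E δ)
    (ι : (Fin m → Bool) → Fin M) (hι : Function.Injective ι)
    (ℱ : Set ((Fin m → Bool) → Bool))
    (lam1 lam2 : ℝ) (h1 : δ ≤ lam1) (h2 : δ ≤ lam2) :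
    ∃ (Q : (Fin m → Bool) → (Fin n → 𝒳) → ℝ)
      (D : ((Fin m → Bool) → Bool) → Finset (Fin n → 𝒴)),
      IsBFCCode W ℱ Q D lam1 lam2 := by
  classical
  obtain ⟨-, hdisj, herr⟩ := hcode
  refine ⟨fun i x => if x = u (ι i) then 1 else 0,
    fun f => (Finset.univ.filter fun i => f i = true).biUnion fun i => E (ι i), ?_, ?_⟩
  · intro i
    constructor
    · intro x; dsimp only; split <;> norm_num
    · simp
  · intro i f _
    have hout : ∀ S : Finset (Fin n → 𝒴),
        outProb W (fun x => if x = u (ι i) then 1 else 0) S = ∑ y ∈ S, W (u (ι i)) y := by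
      intro S
      unfold outProb
      rw [Finset.sum_eq_single (u (ι i))]
      · simp
      · intro b _ hb; simp [hb]
      · simp
    constructor
    · intro hfi
      rw [hout]
      refine le_trans (le_trans ?_ (herr (ι i))) h1
      apply Finset.sum_le_sum_of_subset_of_nonneg
      · apply Finset.compl_subset_compl.mpr
        intro y hy
        exact Finset.mem_biUnion.mpr ⟨i, by simp [hfi], hy⟩
      · intro y _ _; exact (hW (u (ι i))).1 y
    · intro hfi
      rw [hout]
      refine le_trans (le_trans ?_ (herr (ι i))) h2
      apply Finset.sum_le_sum_of_subset_of_nonneg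
      · intro y hy
        obtain ⟨j, hj, hyj⟩ := Finset.mem_biUnion.mp hy
        have hji : j ≠ i := by
          intro h; subst h; simp [hfi] at hj
        have : ι j ≠ ι i := fun h => hji (hι h)
        rw [Finset.mem_compl]
        exact Finset.disjoint_left.mp (hdisj (ι j) (ι i) this) hyj
      · intro y _ _; exact (hW (u (ι i))).1 y

/-- Achievability, Case 6: for Hamming weight bound `c·2^{γ'·m}` with
`γ' ∈ (0, 1]`, the computation rate `C` is achievable with scaling function
`L(R,n) = R·n`. -/
theorem achievability_case6 {𝒳 𝒴 : Type*}
    [Fintype 𝒳] [DecidableEq 𝒳] [Fintype 𝒴] [DecidableEq 𝒴]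
    (W : ∀ n : ℕ, (Fin n → 𝒳) → (Fin n → 𝒴) → ℝ) (hW : ∀ n, IsChannel (W n))
    (C : ℝ) (hC : 0 < C) (hrate : SupportsRate W C)
    (c : ℝ) (hc : 0 < c) (γ' : ℝ) (hγ'0 : 0 < γ') (hγ'1 : γ' ≤ 1)
    (lam1 : ℝ) (hl1 : 0 < lam1) (hl1' : lam1 < 1)
    (lam2 : ℝ) (hl2 : 0 < lam2) (hl2' : lam2 < 1)
    (γ : ℝ) (hγ0 : 0 < γ) (hγC : γ < C) :
    ∃ n₀ : ℕ, ∀ n ≥ n₀, ∃ m : ℕ, 0 < m ∧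
      (C - γ) * (n : ℝ) < (m : ℝ) ∧
      ∃ (Q : (Fin m → Bool) → (Fin n → 𝒳) → ℝ)
        (D : ((Fin m → Bool) → Bool) → Finset (Fin n → 𝒴)),
        IsBFCCode (W n) (FleR m (c * (2:ℝ) ^ (γ' * (m : ℝ)))) Q D lam1 lam2 := by
  classical
  have hδ0 : 0 < min lam1 lam2 / 2 := by positivity
  have hδl1 : min lam1 lam2 / 2 ≤ lam1 :=
    le_trans (by linarith [hδ0]) (min_le_left lam1 lam2)
  have hδl2 : min lam1 lam2 / 2 ≤ lam2 :=
    le_trans (by linarith [hδ0]) (min_le_right lam1 lam2)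
  have hδhalf : min lam1 lam2 / 2 < 1/2 := by
    have := min_le_left lam1 lam2
    linarith
  obtain ⟨n₁, hn₁⟩ := hrate (γ/2) (by linarith) _ hδ0 hδhalf
  refine ⟨max n₁ ⌈(2:ℝ)/γ⌉₊, fun n hn => ?_⟩
  obtain ⟨u, E, hcode⟩ := hn₁ n (le_trans (le_max_left _ _) hn)
  set m : ℕ := ⌊(C-γ) * (n:ℝ)⌋₊ + 1 with hm
  have hmpos : 0 < m := Nat.succ_pos _
  have hcn0 : (0:ℝ) ≤ (C-γ) * n := by
    apply mul_nonneg (by linarith) (Nat.cast_nonneg n)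
  have hmlt : (C-γ) * (n:ℝ) < (m:ℝ) := by
    rw [hm]; push_cast
    exact Nat.lt_floor_add_one _
  have hn2γ : (2:ℝ)/γ ≤ n := by
    have : (⌈(2:ℝ)/γ⌉₊ : ℝ) ≤ n := Nat.cast_le.mpr (le_trans (le_max_right _ _) hn)
    exact le_trans (Nat.le_ceil _) this
  -- 2^m ≤ M
  have hcard : 2 ^ m ≤ ⌈(2:ℝ) ^ ((n : ℝ) * (C - γ/2))⌉₊ := by
    have h1 : (m:ℝ) ≤ (C-γ)*n + 1 := by
      rw [hm]; push_cast
      have := Nat.floor_le hcn0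
      linarith
    have h2 : (C-γ)*n + 1 ≤ (n:ℝ) * (C - γ/2) := by
      have hγn : (1:ℝ) ≤ γ/2 * n := by
        rw [div_mul_eq_mul_div, le_div_iff₀ (by norm_num)]
        calc (1:ℝ) * 2 = 2 := by ring
        _ = (2/γ) * γ := by field_simp
        _ ≤ (n:ℝ) * γ := mul_le_mul_of_nonneg_right hn2γ (le_of_lt hγ0)
        _ = γ * n := mul_comm _ _
      nlinarith
    have h3 : ((2:ℕ)^m : ℝ) ≤ (2:ℝ) ^ ((n : ℝ) * (C - γ/2)) := by
      have : ((2:ℕ)^m : ℝ) = (2:ℝ) ^ (m:ℝ) := by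
        rw [Real.rpow_natCast]; push_cast; ring
      rw [this]
      apply Real.rpow_le_rpow_of_exponent_le (by norm_num)
      linarith
    have := le_trans h3 (Nat.le_ceil _)
    exact_mod_cast this
  obtain ⟨ι⟩ := Function.Embedding.nonempty_of_card_le (α := Fin m → Bool)
    (β := Fin ⌈(2:ℝ) ^ ((n : ℝ) * (C - γ/2))⌉₊)
    (by simpa [Fintype.card_fun] using hcard)
  obtain ⟨Q, D, hQD⟩ := bfc_of_transmission (W n) (hW n) u E _ hcode ι ι.injective
    (FleR m (c * (2:ℝ) ^ (γ' * (m : ℝ)))) lam1 lam2 hδl1 hδl2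
  exact ⟨m, hmpos, hmlt, Q, D, hQD⟩
end

section
/- For every integer m ≥ 1, every integer S with 1 ≤ S ≤ 2^{m−1}, and every α ∈ (0, 1), there exists a set ℱ ⊆ ℱ_m^W(S) of Boolean functions of Hamming weight exactly S satisfying: (i) for any two distinct f, g ∈ ℱ, |f^{-1}(1) ∩ g^{-1}(1)| ≤ α·S; and (ii) log₂|ℱ| ≥ log₂ C(2^m, S) − log₂ C(2^m, ⌈(1−α)S⌉ − 1) − S, where C(a,b) denotes the binomial coefficient. -/
open Finset

private lemma choose_mono_of_le_half {n k l : ℕ} (hkl : k ≤ l) (hl : 2 * l ≤ n) :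
    n.choose k ≤ n.choose l := by
  induction l with
  | zero => simp [Nat.le_zero.mp hkl]
  | succ l ih =>
    rcases Nat.eq_or_lt_of_le hkl with rfl | h
    · exact le_rfl
    · calc n.choose k ≤ n.choose l := ih (Nat.lt_succ_iff.mp h) (by omega)
        _ ≤ n.choose (l + 1) := Nat.choose_le_succ_of_lt_half_left (by omega)

private lemma greedy_packing {β : Type*} [DecidableEq β] (R : β → β → Prop)
    [DecidableRel R] (hsym : ∀ a b, R a b → R b a) (K : ℕ) (V : Finset β)
    (hrefl : ∀ v ∈ V, R v v) (hK : ∀ v ∈ V, (V.filter (fun w => R v w)).card ≤ K) :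
    ∃ F ⊆ V, (∀ f ∈ F, ∀ g ∈ F, f ≠ g → ¬ R f g) ∧ V.card ≤ K * F.card := by
  induction V using Finset.strongInduction with
  | _ V ih =>
    rcases V.eq_empty_or_nonempty with rfl | ⟨v, hv⟩
    · exact ⟨∅, by simp⟩
    · set V' := V \ V.filter (fun w => R v w) with hV'def
      have hvmem : v ∈ V.filter (fun w => R v w) := by
        simp [Finset.mem_filter, hv, hrefl v hv]
      have hssub : V' ⊂ V :=
        Finset.sdiff_ssubset (Finset.filter_subset _ _) ⟨v, hvmem⟩
      obtain ⟨F', hF'sub, hpair, hcard⟩ := ih V' hssub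
        (fun w hw => hrefl w (Finset.mem_sdiff.mp hw).1)
        (fun w hw => le_trans (Finset.card_le_card
          (Finset.filter_subset_filter _ (Finset.sdiff_subset))) (hK w (Finset.mem_sdiff.mp hw).1))
      have hvF' : v ∉ F' := fun h => (Finset.mem_sdiff.mp (hF'sub h)).2 hvmem
      refine ⟨insert v F', ?_, ?_, ?_⟩
      · exact Finset.insert_subset hv (hF'sub.trans Finset.sdiff_subset)
      · intro f hf g hg hfg
        have key : ∀ a ∈ F', ¬ R v a ∧ ¬ R a v := by
          intro a ha
          have hsd := Finset.mem_sdiff.mp (hF'sub ha)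
          have hna : ¬ R v a := fun hR => hsd.2 (Finset.mem_filter.mpr ⟨hsd.1, hR⟩)
          exact ⟨hna, fun hR => hna (hsym _ _ hR)⟩
        rcases Finset.mem_insert.mp hf with hfv | hf'
        · rcases Finset.mem_insert.mp hg with hgv | hg'
          · exact absurd (hfv.trans hgv.symm) hfg
          · subst hfv; exact (key g hg').1
        · rcases Finset.mem_insert.mp hg with hgv | hg'
          · subst hgv; exact (key f hf').2
          · exact hpair f hf' g hg' hfg
      · have h1 : V'.card + (V.filter (fun w => R v w)).card = V.card :=
          Finset.card_sdiff_add_card_eq_card (Finset.filter_subset _ _)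
        have h2 : (V.filter (fun w => R v w)).card ≤ K := hK v hv
        rw [Finset.card_insert_of_notMem hvF']
        calc V.card = V'.card + (V.filter (fun w => R v w)).card := h1.symm
          _ ≤ K * F'.card + K := Nat.add_le_add hcard h2
          _ = K * (F'.card + 1) := by ring

private lemma count_bad {X : Type*} [Fintype X] [DecidableEq X]
    (S t : ℕ) (α : ℝ) (hS1 : 1 ≤ S) (ht1 : 1 ≤ t) (hαpos : 0 < α)
    (hle : (1 - α) * (S : ℝ) ≤ (t : ℝ)) (htn : 2 * (t - 1) ≤ Fintype.card X)
    (A : Finset X) (hA : A.card = S) :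
    ((Finset.powersetCard S (Finset.univ : Finset X)).filter
        (fun B => (α * (S : ℝ)) < ((A ∩ B).card : ℝ))).card
      ≤ 2 ^ S * (Fintype.card X).choose (t - 1) := by
  classical
  set T := (Finset.powersetCard S (Finset.univ : Finset X)).filter
      (fun B => (α * (S : ℝ)) < ((A ∩ B).card : ℝ)) with hTdef
  have hfib : T.card = ∑ C ∈ A.powerset, (T.filter (fun B => B ∩ A = C)).card := by
    apply Finset.card_eq_sum_card_fiberwise
    intro B _
    exact Finset.mem_powerset.mpr (Finset.inter_subset_right)
  rw [hfib]
  have hbound : ∀ C ∈ A.powerset,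
      (T.filter (fun B => B ∩ A = C)).card ≤ (Fintype.card X).choose (t - 1) := by
    intro C hC
    rcases (T.filter (fun B => B ∩ A = C)).eq_empty_or_nonempty with he | ⟨B₀, hB₀⟩
    · simp [he]
    · -- derive S - C.card ≤ t - 1
      obtain ⟨hB₀T, hB₀C⟩ := Finset.mem_filter.mp hB₀
      obtain ⟨hB₀mem, hB₀α⟩ := Finset.mem_filter.mp hB₀T
      have hB₀card : B₀.card = S := (Finset.mem_powersetCard.mp hB₀mem).2
      have hCcard : (A ∩ B₀).card = C.card := by rw [Finset.inter_comm, hB₀C]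
      have hCleS : C.card ≤ S := by
        rw [← hCcard, ← hA]; exact Finset.card_le_card Finset.inter_subset_left
      have hαC : α * (S : ℝ) < (C.card : ℝ) := by rwa [hCcard] at hB₀α
      have hkey : S - C.card ≤ t - 1 := by
        have h1 : ((S - C.card : ℕ) : ℝ) = (S : ℝ) - (C.card : ℝ) := by
          push_cast [Nat.cast_sub hCleS]; ring
        have h2 : ((S - C.card : ℕ) : ℝ) < (t : ℝ) := by
          rw [h1]; nlinarith
        have h3 : S - C.card < t := by exact_mod_cast h2
        omega
      calc (T.filter (fun B => B ∩ A = C)).card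
          ≤ (Finset.powersetCard (S - C.card) (Finset.univ : Finset X)).card := by
            apply Finset.card_le_card_of_injOn (fun B => B \ A)
            · intro B hB
              obtain ⟨hBT, hBC⟩ := Finset.mem_filter.mp hB
              obtain ⟨hBmem, _⟩ := Finset.mem_filter.mp hBT
              have hBcard : B.card = S := (Finset.mem_powersetCard.mp hBmem).2
              have := Finset.card_inter_add_card_sdiff B A
              simp only [Finset.mem_coe]
              rw [Finset.mem_powersetCard]
              exact ⟨Finset.subset_univ _, by rw [hBC] at this; omega⟩
            · intro B₁ h₁ B₂ h₂ hEq
              have e₁ := (Finset.mem_filter.mp h₁).2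
              have e₂ := (Finset.mem_filter.mp h₂).2
              have hsplit : ∀ B : Finset X, B ∩ A ∪ B \ A = B := by
                intro B; ext x
                simp only [Finset.mem_union, Finset.mem_inter, Finset.mem_sdiff]
                tauto
              have hEq' : B₁ \ A = B₂ \ A := hEq
              have : B₁ ∩ A ∪ B₁ \ A = B₂ ∩ A ∪ B₂ \ A := by
                rw [e₁, e₂, hEq']
              rwa [hsplit, hsplit] at this
        _ = (Fintype.card X).choose (S - C.card) := by
            rw [Finset.card_powersetCard, Finset.card_univ]
        _ ≤ (Fintype.card X).choose (t - 1) := choose_mono_of_le_half hkey htn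
  calc ∑ C ∈ A.powerset, (T.filter (fun B => B ∩ A = C)).card
      ≤ ∑ _C ∈ A.powerset, (Fintype.card X).choose (t - 1) := Finset.sum_le_sum hbound
    _ = 2 ^ S * (Fintype.card X).choose (t - 1) := by
        rw [Finset.sum_const, Finset.card_powerset, hA, smul_eq_mul]

/-- existence of a large family of Boolean functions of Hamming weight
exactly `S` whose pre-images of `1` have small pairwise intersections. -/
theorem exists_low_overlap_function_family (m S : ℕ) (hm : 1 ≤ m)
    (hS1 : 1 ≤ S) (hS2 : S ≤ 2 ^ (m - 1))
    (α : ℝ) (hα0 : 0 < α) (hα1 : α < 1) :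
    ∃ F : Finset ((Fin m → Bool) → Bool),
      (∀ f ∈ F, hammingWeight f = S) ∧
      (∀ f ∈ F, ∀ g ∈ F, f ≠ g →
        ((Finset.univ.filter fun i => f i = true ∧ g i = true).card : ℝ) ≤ α * S) ∧
      Real.logb 2 (Nat.choose (2 ^ m) S : ℝ)
          - Real.logb 2 (Nat.choose (2 ^ m) (⌈(1 - α) * (S : ℝ)⌉₊ - 1) : ℝ) - (S : ℝ)
        ≤ Real.logb 2 (F.card : ℝ) := by
  classical
  set X := (Fin m → Bool)
  have hcardX : Fintype.card X = 2 ^ m := by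
    simp [X, Fintype.card_fun]
  set t : ℕ := ⌈(1 - α) * (S : ℝ)⌉₊ with htdef
  have hSpos : (0 : ℝ) < (S : ℝ) := by exact_mod_cast hS1
  have ht1 : 1 ≤ t := by
    have : (0 : ℝ) < (1 - α) * (S : ℝ) := by nlinarith
    exact Nat.ceil_pos.mpr this
  have hle : (1 - α) * (S : ℝ) ≤ (t : ℝ) := Nat.le_ceil _
  have htS : t ≤ S := Nat.ceil_le.mpr (by nlinarith)
  have hNpow : 2 ^ m = 2 * 2 ^ (m - 1) := by
    rw [← pow_succ']
    congr 1
    omega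
  have htn : 2 * (t - 1) ≤ Fintype.card X := by
    rw [hcardX, hNpow]
    omega
  -- the conflict relation on S-subsets
  set R : Finset X → Finset X → Prop := fun A B => (α * (S : ℝ)) < ((A ∩ B).card : ℝ)
    with hRdef
  set V : Finset (Finset X) := Finset.powersetCard S (Finset.univ : Finset X) with hVdef
  have hcardmem : ∀ A ∈ V, A.card = S := fun A hA => (Finset.mem_powersetCard.mp hA).2
  obtain ⟨𝒜, h𝒜V, h𝒜pair, h𝒜card⟩ :=
    greedy_packing R (fun A B h => by rwa [hRdef, Finset.inter_comm] at h)
      (2 ^ S * (Fintype.card X).choose (t - 1)) V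
      (fun A hA => by
        simp only [hRdef, Finset.inter_self, hcardmem A hA]
        nlinarith)
      (fun A hA => count_bad S t α hS1 ht1 hα0 hle htn A (hcardmem A hA))
  -- convert subsets to Boolean functions
  set ind : Finset X → (X → Bool) := fun A => fun i => decide (i ∈ A) with hinddef
  have hindinj : ∀ A B : Finset X, ind A = ind B → A = B := by
    intro A B h
    ext i
    have := congrFun h i
    simpa [hinddef] using this
  refine ⟨𝒜.image ind, ?_, ?_, ?_⟩
  · intro f hf
    obtain ⟨A, hA, rfl⟩ := Finset.mem_image.mp hf
    simp only [hammingWeight, hinddef, decide_eq_true_eq]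
    rw [show (Finset.univ.filter fun i => i ∈ A) = A from Finset.filter_univ_mem A]
    exact hcardmem A (h𝒜V hA)
  · intro f hf g hg hfg
    obtain ⟨A, hA, rfl⟩ := Finset.mem_image.mp hf
    obtain ⟨B, hB, rfl⟩ := Finset.mem_image.mp hg
    have hAB : A ≠ B := fun h => hfg (by rw [h])
    have hnR := h𝒜pair A hA B hB hAB
    simp only [hRdef, not_lt] at hnR
    have : (Finset.univ.filter fun i => ind A i = true ∧ ind B i = true) = A ∩ B := by
      ext i
      simp [hinddef]
    rw [this]
    exact hnR
  · -- the cardinality bound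
    have himgcard : (𝒜.image ind).card = 𝒜.card :=
      Finset.card_image_of_injOn (fun A _ B _ h => hindinj A B h)
    have hVcard : V.card = (2 ^ m).choose S := by
      rw [hVdef, Finset.card_powersetCard, Finset.card_univ, hcardX]
    rw [hVcard, hcardX] at h𝒜card
    set c1 : ℕ := (2 ^ m).choose S
    set c2 : ℕ := (2 ^ m).choose (t - 1)
    have hc1pos : 0 < c1 := Nat.choose_pos (le_trans hS2 (by rw [hNpow]; omega))
    have hc2pos : 0 < c2 := Nat.choose_pos (by rw [hNpow]; omega)
    have hMpos : 0 < 𝒜.card := by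
      rcases Nat.eq_zero_or_pos 𝒜.card with h | h
      · rw [h, Nat.mul_zero] at h𝒜card; omega
      · exact h
    have hreal : (c1 : ℝ) ≤ 2 ^ S * (c2 : ℝ) * (𝒜.card : ℝ) := by
      exact_mod_cast h𝒜card
    have hlogb := Real.logb_le_logb_of_le (b := 2) one_lt_two
      (by exact_mod_cast hc1pos) hreal
    have hexp : Real.logb 2 (2 ^ S * (c2 : ℝ) * (𝒜.card : ℝ))
        = (S : ℝ) + Real.logb 2 (c2 : ℝ) + Real.logb 2 (𝒜.card : ℝ) := by
      rw [Real.logb_mul (by positivity) (by exact_mod_cast hMpos.ne'),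
        Real.logb_mul (by positivity) (by exact_mod_cast hc2pos.ne'),
        Real.logb_pow, Real.logb_self_eq_one one_lt_two]
      ring
    rw [hexp] at hlogb
    rw [himgcard]
    have : Real.logb 2 (c1 : ℝ) - Real.logb 2 (c2 : ℝ) - (S : ℝ)
        ≤ Real.logb 2 (𝒜.card : ℝ) := by linarith
    exact this
end
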